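/- arXiv:2008.01185 — 6 statements merged into one kernel-verified Lean document; each statement's English description precedes it below -/
import Mathlib

section
/- Condition (U) holds if and only if for every x ∈ ℝ one has sup_{g∈Γ*} g(x) = +∞ and inf_{g∈Γ*} g(x) = −∞, where Γ* is the semigroup generated by Γ under composition. Moreover, if (U) holds, then every nonempty Γ-invariant set M ⊆ ℝ is unbounded above and unbounded below. -/
open MeasureTheory Filter Set Function Topology
open scoped ENNReal NNReal

section SDS

variable {ι : Type*}

/-- An orientation-preserving homeomorphism of `ℝ`, modeled as a strictly increasing
surjection (such a map is automatically a homeomorphism of `ℝ`). -/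
def IsOPH (g : ℝ → ℝ) : Prop := StrictMono g ∧ Function.Surjective g

/-- The Markov chain `X_n^x = g_{ω (n-1)} ∘ ⋯ ∘ g_{ω 0} (x)` driven by the sequence `ω`. -/
def chain (G : ι → ℝ → ℝ) (ω : ℕ → ι) (x : ℝ) : ℕ → ℝ
  | 0 => x
  | n + 1 => G (ω n) (chain G ω x n)

/-- Composition `G l₀ ∘ G l₁ ∘ ⋯` along a list `l`. -/
def comps (G : ι → ℝ → ℝ) (l : List ι) : ℝ → ℝ := l.foldr (fun i f => G i ∘ f) id

/-- The semigroup `Γ*` generated by the maps `G i` under composition. -/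
def sgen (G : ι → ℝ → ℝ) : Set (ℝ → ℝ) := {f | ∃ l : List ι, l ≠ [] ∧ f = comps G l}

variable [MeasurableSpace ι]

/-- `Q` is the product measure `μm^{⊗ℕ}` on `ι^ℕ` (for a discrete base measure `μm`
this property characterizes the product measure). -/
def IsProd (μm : Measure ι) (Q : Measure (ℕ → ι)) : Prop :=
  ∀ (n : ℕ) (c : ℕ → ι),
    Q {ω : ℕ → ι | ∀ k < n, ω k = c k} = ∏ k ∈ Finset.range n, μm {c k}

/-- A Radon measure on `ℝ`: a Borel measure which is finite on compact sets. -/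
def IsRadon (ν : Measure ℝ) : Prop := ∀ K : Set ℝ, IsCompact K → ν K < ⊤

/-- Invariance of `ν` for the system generated by the discrete measure `μm` on the
maps `G i`:  `∫ f dν = Σ_g μ(g) ∫ f(g x) dν(x)` for every continuous compactly
supported `f`. -/
def IsInv (G : ι → ℝ → ℝ) (μm : Measure ι) (ν : Measure ℝ) : Prop :=
  ∀ f : ℝ → ℝ, Continuous f → HasCompactSupport f →
    ∫ x, f x ∂ν = ∑' i : ι, (μm {i}).toReal * ∫ x, f (G i x) ∂ν

/-- Ergodicity: `ν` is invariant and any Borel set whose restriction is again invariant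
is either null or conull. -/
def IsErg (G : ι → ℝ → ℝ) (μm : Measure ι) (ν : Measure ℝ) : Prop :=
  IsInv G μm ν ∧
    ∀ A : Set ℝ, MeasurableSet A → IsInv G μm (ν.restrict A) → ν A = 0 ∨ ν Aᶜ = 0

/-- The support of a measure: points all of whose open neighbourhoods have positive
measure. -/
def msupp (ν : Measure ℝ) : Set ℝ := {x | ∀ U : Set ℝ, IsOpen U → x ∈ U → 0 < ν U}

/-- Condition (R): there is a compact interval visited infinitely often, a.s., from any
starting point. -/
def CondR (G : ι → ℝ → ℝ) (Q : Measure (ℕ → ι)) : Prop :=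
  ∃ a b : ℝ, a ≤ b ∧ ∀ x : ℝ, ∀ᵐ ω ∂Q, ∃ᶠ n in atTop, chain G ω x n ∈ Icc a b

/-- Condition (C): there is an interval `I` such that any compact set can be mapped
into `I` by an element of the semigroup `Γ*`. -/
def CondC (G : ι → ℝ → ℝ) : Prop :=
  ∃ a b : ℝ, ∀ K : Set ℝ, IsCompact K → ∃ g ∈ sgen G, g '' K ⊆ Icc a b

/-- Condition (U): from any point one can move both up and down. -/
def CondU (G : ι → ℝ → ℝ) : Prop :=
  ∀ x : ℝ, ∃ i j : ι, G i x < x ∧ x < G j x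

end SDS

section Aux

variable {ι : Type*}

lemma sgen_single (G : ι → ℝ → ℝ) (j : ι) : G j ∈ sgen G :=
  ⟨[j], List.cons_ne_nil _ _, rfl⟩

lemma sgen_comp (G : ι → ℝ → ℝ) (j : ι) {g : ℝ → ℝ} (hg : g ∈ sgen G) :
    (G j ∘ g) ∈ sgen G := by
  obtain ⟨l, -, rfl⟩ := hg
  exact ⟨j :: l, List.cons_ne_nil _ _, rfl⟩

lemma orbit_unbounded_above (G : ι → ℝ → ℝ) (hG : ∀ i, IsOPH (G i))
    (hU : CondU G) (x : ℝ) : ∀ M : ℝ, ∃ g ∈ sgen G, M < g x := by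
  intro M
  by_contra h
  push_neg at h
  set S : Set ℝ := insert x {y | ∃ g ∈ sgen G, g x = y} with hS
  have hSne : S.Nonempty := ⟨x, Or.inl rfl⟩
  have hSbd : BddAbove S := by
    refine ⟨max x M, ?_⟩
    rintro y (rfl | ⟨g, hg, rfl⟩)
    · exact le_max_left _ _
    · exact le_max_of_le_right (h g hg)
  obtain ⟨i, j, hi, hj⟩ := hU (sSup S)
  obtain ⟨t, ht⟩ := (hG j).2 (sSup S)
  have htlt : t < sSup S := by
    by_contra h'
    push_neg at h'
    have := (hG j).1.monotone h'
    rw [ht] at this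
    linarith
  obtain ⟨y, hyS, hylt⟩ := exists_lt_of_lt_csSup hSne htlt
  have hGy : G j y ∈ S := by
    rcases hyS with rfl | ⟨g, hg, rfl⟩
    · exact Or.inr ⟨G j, sgen_single G j, rfl⟩
    · exact Or.inr ⟨G j ∘ g, sgen_comp G j hg, rfl⟩
  have h1 : sSup S < G j y := ht ▸ (hG j).1 hylt
  have h2 : G j y ≤ sSup S := le_csSup hSbd hGy
  linarith

lemma orbit_unbounded_below (G : ι → ℝ → ℝ) (hG : ∀ i, IsOPH (G i))
    (hU : CondU G) (x : ℝ) : ∀ M : ℝ, ∃ g ∈ sgen G, g x < M := by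
  intro M
  by_contra h
  push_neg at h
  set S : Set ℝ := insert x {y | ∃ g ∈ sgen G, g x = y} with hS
  have hSne : S.Nonempty := ⟨x, Or.inl rfl⟩
  have hSbd : BddBelow S := by
    refine ⟨min x M, ?_⟩
    rintro y (rfl | ⟨g, hg, rfl⟩)
    · exact min_le_left _ _
    · exact min_le_of_right_le (h g hg)
  obtain ⟨i, j, hi, hj⟩ := hU (sInf S)
  obtain ⟨t, ht⟩ := (hG i).2 (sInf S)
  have htgt : sInf S < t := by
    by_contra h'
    push_neg at h'
    have := (hG i).1.monotone h'
    rw [ht] at this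
    linarith
  obtain ⟨y, hyS, hylt⟩ := exists_lt_of_csInf_lt hSne htgt
  have hGy : G i y ∈ S := by
    rcases hyS with rfl | ⟨g, hg, rfl⟩
    · exact Or.inr ⟨G i, sgen_single G i, rfl⟩
    · exact Or.inr ⟨G i ∘ g, sgen_comp G i hg, rfl⟩
  have h1 : G i y < sInf S := ht ▸ (hG i).1 hylt
  have h2 : sInf S ≤ G i y := csInf_le hSbd hGy
  linarith

lemma comps_le_of_le (G : ι → ℝ → ℝ) (hG : ∀ i, IsOPH (G i)) {x : ℝ}
    (h : ∀ i, G i x ≤ x) : ∀ l : List ι, comps G l x ≤ x := by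
  intro l
  induction l with
  | nil => exact le_refl x
  | cons i l ih =>
    calc comps G (i :: l) x = G i (comps G l x) := rfl
      _ ≤ G i x := (hG i).1.monotone ih
      _ ≤ x := h i

lemma le_comps_of_le (G : ι → ℝ → ℝ) (hG : ∀ i, IsOPH (G i)) {x : ℝ}
    (h : ∀ i, x ≤ G i x) : ∀ l : List ι, x ≤ comps G l x := by
  intro l
  induction l with
  | nil => exact le_refl x
  | cons i l ih =>
    calc x ≤ G i x := h i
      _ ≤ G i (comps G l x) := (hG i).1.monotone ih
      _ = comps G (i :: l) x := rfl

lemma comps_mem_of_inv (G : ι → ℝ → ℝ) {M : Set ℝ} (hM : ∀ i, G i '' M ⊆ M)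
    {m : ℝ} (hm : m ∈ M) : ∀ l : List ι, comps G l m ∈ M := by
  intro l
  induction l with
  | nil => exact hm
  | cons i l ih => exact hM i ⟨comps G l m, ih, rfl⟩

end Aux

/-- **Lemma.** Condition (U) holds iff from every point the semigroup `Γ*` reaches
arbitrarily high and arbitrarily low values; moreover under (U) every nonempty
`Γ`-invariant set is unbounded above and below. -/
theorem condU_iff_unbounded_orbits
    {ι : Type*} [Countable ι]
    (G : ι → ℝ → ℝ) (hG : ∀ i, IsOPH (G i)) :
    (CondU G ↔ ∀ x : ℝ,
        (∀ M : ℝ, ∃ g ∈ sgen G, M < g x) ∧ (∀ M : ℝ, ∃ g ∈ sgen G, g x < M)) ∧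
    (CondU G → ∀ M : Set ℝ, M.Nonempty → (∀ i, G i '' M ⊆ M) →
        ¬ BddAbove M ∧ ¬ BddBelow M) := by
  constructor
  · constructor
    · intro hU x
      exact ⟨orbit_unbounded_above G hG hU x, orbit_unbounded_below G hG hU x⟩
    · intro h x
      have hup : ∃ j : ι, x < G j x := by
        by_contra hc
        push_neg at hc
        obtain ⟨g, ⟨l, -, rfl⟩, hgx⟩ := (h x).1 x
        exact absurd hgx (not_lt.mpr (comps_le_of_le G hG hc l))
      have hdown : ∃ i : ι, G i x < x := by
        by_contra hc
        push_neg at hc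
        obtain ⟨g, ⟨l, -, rfl⟩, hgx⟩ := (h x).2 x
        exact absurd hgx (not_lt.mpr (le_comps_of_le G hG hc l))
      obtain ⟨j, hj⟩ := hup
      obtain ⟨i, hi⟩ := hdown
      exact ⟨i, j, hi, hj⟩
  · intro hU M hMne hMinv
    obtain ⟨m, hm⟩ := hMne
    constructor
    · rintro ⟨B, hB⟩
      obtain ⟨g, ⟨l, -, rfl⟩, hg⟩ := orbit_unbounded_above G hG hU m B
      exact absurd (hB (comps_mem_of_inv G hMinv hm l)) (not_le.mpr hg)
    · rintro ⟨B, hB⟩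
      obtain ⟨g, ⟨l, -, rfl⟩, hg⟩ := orbit_unbounded_below G hG hU m B
      exact absurd (hB (comps_mem_of_inv G hMinv hm l)) (not_le.mpr hg)
end

section
/- Assume condition (R) holds with recurrence interval I. Let ν be an invariant Radon measure possessing at least one atom, and let K be a compact interval such that I ⊆ K and ν({y}) > 0 for some y ∈ K. Then there exists x₀ ∈ K such that the set {h(x₀) : h ∈ (Γ⁻¹)*} ∩ K is finite, where (Γ⁻¹)* is the semigroup generated under composition by the inverses {g⁻¹ : g ∈ Γ}. -/
open MeasureTheory Filter Set Function Topology
open scoped ENNReal NNReal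

namespace AtomPf

/-! ### Hat functions -/

noncomputable def hat (y ε : ℝ) : ℝ → ℝ := fun x => max (1 - |x - y| / ε) 0

lemma hat_cont (y ε : ℝ) : Continuous (hat y ε) := by
  unfold hat
  exact (continuous_const.sub (((continuous_id.sub continuous_const).abs).div_const ε)).max
    continuous_const

lemma hat_nonneg (y ε x : ℝ) : 0 ≤ hat y ε x := le_max_right _ _

lemma hat_self (y : ℝ) {ε : ℝ} (hε : 0 < ε) : hat y ε y = 1 := by
  simp [hat]

lemma hat_le_one (y : ℝ) {ε : ℝ} (hε : 0 < ε) (x : ℝ) : hat y ε x ≤ 1 := by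
  apply max_le _ zero_le_one
  have : 0 ≤ |x - y| / ε := div_nonneg (abs_nonneg _) hε.le
  linarith

lemma hat_eq_zero (y : ℝ) {ε : ℝ} (hε : 0 < ε) {x : ℝ} (hx : x ∉ Icc (y - ε) (y + ε)) :
    hat y ε x = 0 := by
  have hd : ε < |x - y| := by
    rcases abs_cases (x - y) with ⟨h1, h2⟩ | ⟨h1, h2⟩ <;>
    · simp only [mem_Icc, not_and_or, not_le] at hx
      rcases hx with h | h <;> linarith
  have : 1 - |x - y| / ε < 0 := by
    have : 1 < |x - y| / ε := (one_lt_div hε).2 hd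
    linarith
  simp [hat, max_eq_right this.le]

lemma hat_hcs (y : ℝ) {ε : ℝ} (hε : 0 < ε) : HasCompactSupport (hat y ε) := by
  apply HasCompactSupport.intro (isCompact_Icc (a := y - ε) (b := y + ε))
  intro x hx
  exact hat_eq_zero y hε hx

lemma hat_le_indicator (y : ℝ) {ε : ℝ} (hε : 0 < ε) (x : ℝ) :
    hat y ε x ≤ (Icc (y - ε) (y + ε)).indicator (fun _ => (1:ℝ)) x := by
  by_cases hx : x ∈ Icc (y - ε) (y + ε)
  · rw [Set.indicator_of_mem hx]; exact hat_le_one y hε x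
  · rw [Set.indicator_of_notMem hx, hat_eq_zero y hε hx]

lemma indicator_le_hat (y : ℝ) {ε : ℝ} (hε : 0 < ε) (x : ℝ) :
    ({y} : Set ℝ).indicator (fun _ => (1:ℝ)) x ≤ hat y ε x := by
  by_cases hx : x ∈ ({y} : Set ℝ)
  · rw [Set.indicator_of_mem hx]
    have hxy : x = y := hx
    subst hxy
    rw [hat_self x hε]
  · rw [Set.indicator_of_notMem hx]; exact hat_nonneg _ _ _


section Maps

variable {ι : Type*} (G : ι → ℝ → ℝ)

noncomputable def iv (i : ι) : ℝ → ℝ := Function.invFun (G i)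

variable {G}

lemma G_cont {i : ι} (hm : StrictMono (G i)) (hs : Surjective (G i)) : Continuous (G i) :=
  ((hm.orderIsoOfSurjective _ hs).toHomeomorph).continuous

noncomputable def Ghomeo {i : ι} (hm : StrictMono (G i)) (hs : Surjective (G i)) : ℝ ≃ₜ ℝ :=
  (hm.orderIsoOfSurjective _ hs).toHomeomorph

lemma Ghomeo_coe {i : ι} (hm : StrictMono (G i)) (hs : Surjective (G i)) :
    ⇑(Ghomeo hm hs) = G i := rfl

lemma G_iv {i : ι} (hs : Surjective (G i)) (y : ℝ) : G i (iv G i y) = y :=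
  Function.rightInverse_invFun hs y

lemma iv_G {i : ι} (hm : StrictMono (G i)) (x : ℝ) : iv G i (G i x) = x :=
  Function.leftInverse_invFun hm.injective x

end Maps


section Meas

variable {ι : Type*} [MeasurableSpace ι] {G : ι → ℝ → ℝ} {μm : Measure ι} {ν : Measure ℝ}
variable (hmono : ∀ i, StrictMono (G i)) (hsurj : ∀ i, Surjective (G i))
variable (hrad : ∀ K : Set ℝ, IsCompact K → ν K < ⊤)

include hrad in
lemma nu_pt_ne_top (z : ℝ) : ν {z} ≠ ⊤ := (hrad _ isCompact_singleton).ne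

include hrad in
lemma finOnCpt : IsFiniteMeasureOnCompacts ν := ⟨fun _ hK => hrad _ hK⟩

include hrad in
lemma integrable_ccs {f : ℝ → ℝ} (hf : Continuous f) (hcs : HasCompactSupport f) :
    Integrable f ν := by
  haveI := finOnCpt hrad
  exact hf.integrable_of_hasCompactSupport hcs

include hmono hsurj in
lemma comp_cont {f : ℝ → ℝ} (hf : Continuous f) (i : ι) : Continuous (fun x => f (G i x)) :=
  hf.comp (G_cont (hmono i) (hsurj i))

include hmono hsurj in
lemma comp_hcs {f : ℝ → ℝ} (hcs : HasCompactSupport f) (i : ι) :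
    HasCompactSupport (fun x => f (G i x)) := by
  have := hcs.comp_homeomorph (Ghomeo (hmono i) (hsurj i))
  rwa [Ghomeo_coe (hmono i) (hsurj i)] at this

include hrad in
lemma integrable_indicator_pt (z : ℝ) :
    Integrable (({z} : Set ℝ).indicator (fun _ => (1:ℝ))) ν := by
  rw [integrable_indicator_iff (measurableSet_singleton z)]
  exact integrableOn_const (hrad _ isCompact_singleton).ne

include hrad in
lemma int_indicator_pt (z : ℝ) :
    ∫ x, ({z} : Set ℝ).indicator (fun _ => (1:ℝ)) x ∂ν = (ν {z}).toReal := by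
  rw [integral_indicator_const (1:ℝ) (measurableSet_singleton z)]
  simp
  rfl

include hmono hsurj hrad in
/-- lower bound for the integral of a composed hat function -/
lemma int_comp_ge (y : ℝ) {ε : ℝ} (hε : 0 < ε) (i : ι) :
    (ν {iv G i y}).toReal ≤ ∫ x, hat y ε (G i x) ∂ν := by
  rw [← int_indicator_pt hrad (iv G i y)]
  apply integral_mono (integrable_indicator_pt hrad _)
    (integrable_ccs hrad (comp_cont hmono hsurj (hat_cont y ε) i)
      (comp_hcs hmono hsurj (hat_hcs y hε) i))
  intro x
  by_cases hx : x ∈ ({iv G i y} : Set ℝ)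
  · rw [Set.indicator_of_mem hx]
    show (1:ℝ) ≤ hat y ε (G i x)
    have hxy : x = iv G i y := hx
    subst hxy
    rw [G_iv (hsurj i) y, hat_self y hε]
  · rw [Set.indicator_of_notMem hx]
    exact hat_nonneg _ _ _

include hrad in
lemma int_hat_le (y : ℝ) {ε : ℝ} (hε : 0 < ε) :
    ∫ x, hat y ε x ∂ν ≤ (ν (Icc (y - ε) (y + ε))).toReal := by
  have h1 : ∫ x, (Icc (y - ε) (y + ε)).indicator (fun _ => (1:ℝ)) x ∂ν
      = (ν (Icc (y - ε) (y + ε))).toReal := by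
    rw [integral_indicator_const (1:ℝ) measurableSet_Icc]; simp; rfl
  rw [← h1]
  apply integral_mono (integrable_ccs hrad (hat_cont y ε) (hat_hcs y hε))
  · rw [integrable_indicator_iff measurableSet_Icc]
    exact integrableOn_const (hrad _ isCompact_Icc).ne
  · exact hat_le_indicator y hε

include hrad in
lemma int_hat_ge_pt (y : ℝ) {ε : ℝ} (hε : 0 < ε) :
    (ν {y}).toReal ≤ ∫ x, hat y ε x ∂ν := by
  rw [← int_indicator_pt hrad y]
  apply integral_mono (integrable_indicator_pt hrad _)
    (integrable_ccs hrad (hat_cont y ε) (hat_hcs y hε))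
  exact indicator_le_hat y hε

/-- the coefficient family appearing in `IsInv` -/
noncomputable def Ter (G : ι → ℝ → ℝ) (μm : Measure ι) (ν : Measure ℝ) (f : ℝ → ℝ) :
    ι → ℝ := fun i => (μm {i}).toReal * ∫ x, f (G i x) ∂ν

variable (hmu1 : ∀ i : ι, μm {i} ≠ ⊤)
variable (hinv : ∀ f : ℝ → ℝ, Continuous f → HasCompactSupport f →
    ∫ x, f x ∂ν = ∑' i : ι, (μm {i}).toReal * ∫ x, f (G i x) ∂ν)

lemma Ter_nonneg {f : ℝ → ℝ} (hf : ∀ x, 0 ≤ f x) (i : ι) : 0 ≤ Ter G μm ν f i :=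
  mul_nonneg ENNReal.toReal_nonneg (integral_nonneg fun x => hf (G i x))

include hmono hsurj hrad hinv in
/-- junk-value resolution: given an atom, the family in `IsInv` is always summable
for nonnegative test functions -/
lemma summable_Ter (hatom : ∃ y₀ : ℝ, 0 < ν {y₀})
    {f : ℝ → ℝ} (hf : Continuous f) (hcs : HasCompactSupport f) (hfn : ∀ x, 0 ≤ f x) :
    Summable (Ter G μm ν f) := by
  by_contra hns
  have key : ∀ g : ℝ → ℝ, Continuous g → HasCompactSupport g → (∀ x, 0 ≤ g x) →
      ∫ x, g x ∂ν = 0 := by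
    intro g hg hgs hgn
    by_cases hs : Summable (Ter G μm ν g)
    · have hadd : Ter G μm ν (f + g) = fun i => Ter G μm ν f i + Ter G μm ν g i := by
        funext i
        unfold Ter
        have : ∫ x, (f + g) (G i x) ∂ν = (∫ x, f (G i x) ∂ν) + ∫ x, g (G i x) ∂ν := by
          simp only [Pi.add_apply]
          exact integral_add
            (integrable_ccs hrad (comp_cont hmono hsurj hf i) (comp_hcs hmono hsurj hcs i))
            (integrable_ccs hrad (comp_cont hmono hsurj hg i) (comp_hcs hmono hsurj hgs i))
        rw [this, mul_add]
      have hns2 : ¬ Summable (Ter G μm ν (f + g)) := by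
        rw [hadd]
        intro hsum
        exact hns (by simpa using hsum.sub hs)
      have h0 : ∫ x, (f + g) x ∂ν = 0 := by
        rw [hinv (f + g) (hf.add hg) (hcs.add hgs)]
        exact tsum_eq_zero_of_not_summable hns2
      have h1 : ∫ x, (f + g) x ∂ν = (∫ x, f x ∂ν) + ∫ x, g x ∂ν := by
        simp only [Pi.add_apply]
        exact integral_add (integrable_ccs hrad hf hcs) (integrable_ccs hrad hg hgs)
      rw [h1] at h0
      have h2 : 0 ≤ ∫ x, f x ∂ν := integral_nonneg hfn
      have h3 : 0 ≤ ∫ x, g x ∂ν := integral_nonneg hgn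
      linarith
    · rw [hinv g hg hgs]
      exact tsum_eq_zero_of_not_summable hs
  obtain ⟨y₀, hy₀⟩ := hatom
  have h1 := key (hat y₀ 1) (hat_cont y₀ 1) (hat_hcs y₀ one_pos) (fun x => hat_nonneg _ _ _)
  have h2 := int_hat_ge_pt hrad y₀ one_pos
  rw [h1] at h2
  have h3 : 0 < (ν {y₀}).toReal :=
    ENNReal.toReal_pos hy₀.ne' (nu_pt_ne_top hrad y₀)
  linarith

include hmono hsurj hrad hmu1 hinv in
/-- The key one-sided invariance inequality for point masses, in `ℝ≥0∞`. -/
lemma key_ineq (hatom : ∃ y₀ : ℝ, 0 < ν {y₀}) (y : ℝ) :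
    ∑' i : ι, μm {i} * ν {iv G i y} ≤ ν {y} := by
  -- finite-subset bound with parameter ε
  have hfin : ∀ (n : ℕ) (S : Finset ι),
      ∑ i ∈ S, μm {i} * ν {iv G i y} ≤ ν (Icc (y - 1/(n+1)) (y + 1/(n+1))) := by
    intro n S
    set ε : ℝ := 1/(n+1) with hεdef
    have hε : 0 < ε := by positivity
    -- real-valued chain
    have hreal : ∑ i ∈ S, (μm {i}).toReal * (ν {iv G i y}).toReal
        ≤ (ν (Icc (y - ε) (y + ε))).toReal := by
      have t1 : ∀ i ∈ S, (μm {i}).toReal * (ν {iv G i y}).toReal ≤ Ter G μm ν (hat y ε) i := by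
        intro i _
        exact mul_le_mul_of_nonneg_left (int_comp_ge hmono hsurj hrad y hε i)
          ENNReal.toReal_nonneg
      have t2 : ∑ i ∈ S, (μm {i}).toReal * (ν {iv G i y}).toReal
          ≤ ∑ i ∈ S, Ter G μm ν (hat y ε) i := Finset.sum_le_sum t1
      have t3 : ∑ i ∈ S, Ter G μm ν (hat y ε) i ≤ ∑' i, Ter G μm ν (hat y ε) i :=
        Summable.sum_le_tsum S (fun i _ => Ter_nonneg (fun x => hat_nonneg _ _ _) i)
          (summable_Ter hmono hsurj hrad hinv hatom (hat_cont y ε) (hat_hcs y hε)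
            (fun x => hat_nonneg _ _ _))
      have t4 : ∑' i, Ter G μm ν (hat y ε) i = ∫ x, hat y ε x ∂ν :=
        (hinv (hat y ε) (hat_cont y ε) (hat_hcs y hε)).symm
      have t5 := int_hat_le hrad y hε
      calc ∑ i ∈ S, (μm {i}).toReal * (ν {iv G i y}).toReal
          ≤ ∑ i ∈ S, Ter G μm ν (hat y ε) i := t2
        _ ≤ ∑' i, Ter G μm ν (hat y ε) i := t3
        _ = ∫ x, hat y ε x ∂ν := t4
        _ ≤ (ν (Icc (y - ε) (y + ε))).toReal := t5
    -- lift to ℝ≥0∞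
    have hterm_ne : ∀ i ∈ S, μm {i} * ν {iv G i y} ≠ ⊤ := fun i _ =>
      ENNReal.mul_ne_top (hmu1 _) (nu_pt_ne_top hrad _)
    have hsum_ne : ∑ i ∈ S, μm {i} * ν {iv G i y} ≠ ⊤ :=
      (ENNReal.sum_lt_top.2 fun i hi => (hterm_ne i hi).lt_top).ne
    rw [← ENNReal.toReal_le_toReal hsum_ne (hrad _ isCompact_Icc).ne]
    rw [ENNReal.toReal_sum hterm_ne]
    calc ∑ i ∈ S, (μm {i} * ν {iv G i y}).toReal
        = ∑ i ∈ S, (μm {i}).toReal * (ν {iv G i y}).toReal := by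
          refine Finset.sum_congr rfl fun i _ => ENNReal.toReal_mul
      _ ≤ (ν (Icc (y - ε) (y + ε))).toReal := hreal
  -- pass to tsum, then let ε → 0
  have htsum : ∀ n : ℕ, ∑' i : ι, μm {i} * ν {iv G i y}
      ≤ ν (Icc (y - 1/(n+1)) (y + 1/(n+1))) := by
    intro n
    rw [ENNReal.tsum_eq_iSup_sum]
    exact iSup_le fun S => hfin n S
  have hinter : ⋂ n : ℕ, Icc (y - 1/(n+1)) (y + 1/(n+1)) = {y} := by
    ext z
    simp only [Set.mem_iInter, Set.mem_Icc, Set.mem_singleton_iff]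
    constructor
    · intro h
      by_contra hzy
      have hpos : 0 < |z - y| := abs_pos.2 (sub_ne_zero.2 hzy)
      obtain ⟨n, hn⟩ := exists_nat_one_div_lt hpos
      have h2 := h n
      have habs : |z - y| ≤ 1 / (n + 1) :=
        abs_sub_le_iff.2 ⟨by linarith [h2.2], by linarith [h2.1]⟩
      linarith
    · rintro rfl
      intro n
      have : (0:ℝ) < 1/(n+1) := by positivity
      exact ⟨by linarith, by linarith⟩
  have hmeas : Tendsto (fun n : ℕ => ν (Icc (y - 1/(n+1)) (y + 1/(n+1)))) atTop
      (𝓝 (ν {y})) := by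
    rw [← hinter]
    apply tendsto_measure_iInter_atTop
    · exact fun n => measurableSet_Icc.nullMeasurableSet
    · intro m n hmn
      apply Set.Icc_subset_Icc
      · have h1 : (1:ℝ)/(n+1) ≤ 1/(m+1) := by
          apply one_div_le_one_div_of_le
          · positivity
          · have : (m:ℝ) ≤ n := Nat.cast_le.2 hmn
            linarith
        linarith
      · have h1 : (1:ℝ)/(n+1) ≤ 1/(m+1) := by
          apply one_div_le_one_div_of_le
          · positivity
          · have : (m:ℝ) ≤ n := Nat.cast_le.2 hmn
            linarith
        linarith
    · exact ⟨0, (hrad _ isCompact_Icc).ne⟩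
  exact ge_of_tendsto hmeas (Filter.Eventually.of_forall htsum)

end Meas


section Blocks

variable {ι : Type*} [MeasurableSpace ι] [Countable ι]
open scoped Classical

/-- a measurable set containing `i` but not `j`, if one exists -/
noncomputable def SepSet (i j : ι) : Set ι :=
  if h : ∃ S : Set ι, MeasurableSet S ∧ i ∈ S ∧ j ∉ S then h.choose else univ

lemma SepSet_meas (i j : ι) : MeasurableSet (SepSet i j) := by
  unfold SepSet
  split
  · next h => exact h.choose_spec.1
  · exact MeasurableSet.univ

lemma mem_SepSet (i j : ι) : i ∈ SepSet i j := by
  unfold SepSet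
  split
  · next h => exact h.choose_spec.2.1
  · trivial

lemma not_mem_SepSet {i j : ι} {S : Set ι} (hS : MeasurableSet S) (hi : i ∈ S) (hj : j ∉ S) :
    j ∉ SepSet i j := by
  unfold SepSet
  rw [dif_pos ⟨S, hS, hi, hj⟩]
  exact (Exists.choose_spec (⟨S, hS, hi, hj⟩ :
    ∃ S : Set ι, MeasurableSet S ∧ i ∈ S ∧ j ∉ S)).2.2

/-- the measurable "block" (atom of the σ-algebra) containing `i` -/
def Blk (i : ι) : Set ι := ⋂ j, SepSet i j

lemma Blk_meas (i : ι) : MeasurableSet (Blk i) :=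
  MeasurableSet.iInter fun j => SepSet_meas i j

lemma mem_Blk_self (i : ι) : i ∈ Blk i := Set.mem_iInter.2 fun j => mem_SepSet i j

lemma Blk_min {i : ι} {S : Set ι} (hS : MeasurableSet S) (hi : i ∈ S) : Blk i ⊆ S := by
  intro j hj
  by_contra hjS
  exact not_mem_SepSet hS hi hjS (Set.mem_iInter.1 hj j)

lemma mem_of_mem_Blk {i j : ι} (hj : j ∈ Blk i) {S : Set ι} (hS : MeasurableSet S)
    (hjS : j ∈ S) : i ∈ S := by
  by_contra hiS
  have : Blk i ⊆ Sᶜ := Blk_min hS.compl hiS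
  exact this hj hjS

lemma Blk_eq_of_mem {i j : ι} (hj : j ∈ Blk i) : Blk j = Blk i := by
  apply Set.Subset.antisymm
  · exact Blk_min (Blk_meas i) hj
  · apply Blk_min (Blk_meas j)
    exact Set.mem_iInter.2 fun k => mem_of_mem_Blk hj (SepSet_meas j k) (Set.mem_iInter.1
      (mem_Blk_self j) k)

lemma Blk_disjoint {i j : ι} (h : Blk i ≠ Blk j) : Disjoint (Blk i) (Blk j) := by
  rw [Set.disjoint_left]
  intro x hxi hxj
  exact h ((Blk_eq_of_mem hxi).symm.trans (Blk_eq_of_mem hxj))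

lemma meas_eq_iUnion_Blk {S : Set ι} (hS : MeasurableSet S) :
    S = ⋃ i ∈ S, Blk i := by
  apply Set.Subset.antisymm
  · intro x hx
    exact Set.mem_biUnion hx (mem_Blk_self x)
  · intro x hx
    obtain ⟨i, hiS, hxi⟩ := Set.mem_iUnion₂.1 hx
    exact Blk_min hS hiS hxi

lemma mu_Blk (μm : Measure ι) (i : ι) : μm (Blk i) = μm {i} := by
  obtain ⟨t, hsub, htm, htμ⟩ := exists_measurable_superset μm {i}
  have h1 : Blk i ⊆ t := Blk_min htm (hsub rfl)
  refine le_antisymm ?_ (measure_mono (by simpa using mem_Blk_self i))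
  calc μm (Blk i) ≤ μm t := measure_mono h1
    _ = μm {i} := htμ

/-- the (countable) type of blocks -/
def Blks (ι : Type*) [MeasurableSpace ι] : Set (Set ι) := Set.range (Blk : ι → Set ι)

instance : Countable (Blks ι) := (Set.countable_range _).to_subtype

lemma Blks_nonempty (B : Blks ι) : ∃ i : ι, Blk i = B.val := B.prop

/-- canonical choice of an element in each block -/
noncomputable def s0 (B : Blks ι) : ι := (Blks_nonempty B).choose

lemma s0_mem (B : Blks ι) : s0 B ∈ B.val := by
  have h := (Blks_nonempty B).choose_spec
  rw [← h]
  exact mem_Blk_self _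

lemma Blk_of_mem_Blks {B : Blks ι} {i : ι} (hi : i ∈ B.val) : Blk i = B.val := by
  obtain ⟨j, hj⟩ := B.prop
  rw [← hj] at hi ⊢
  exact Blk_eq_of_mem hi

lemma mu_mem_Blks (μm : Measure ι) {B : Blks ι} {i : ι} (hi : i ∈ B.val) :
    μm {i} = μm B.val := by
  rw [← mu_Blk μm i, Blk_of_mem_Blks hi]

/-- a selection function: `sel i₀` picks `i₀` in its own block, a canonical element
elsewhere -/
noncomputable def sel (i₀ : ι) : Blks ι → ι := fun B =>
  if i₀ ∈ B.val then i₀ else s0 B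

lemma sel_mem (i₀ : ι) (B : Blks ι) : sel i₀ B ∈ B.val := by
  unfold sel
  split
  · next h => exact h
  · exact s0_mem B

lemma sel_self (i₀ : ι) : sel i₀ ⟨Blk i₀, Set.mem_range_self i₀⟩ = i₀ := by
  unfold sel
  rw [if_pos (mem_Blk_self i₀)]

lemma sel_inj {s : Blks ι → ι} (hs : ∀ B, s B ∈ B.val) : Function.Injective s := by
  intro B B' h
  apply Subtype.ext
  rw [← Blk_of_mem_Blks (hs B), ← Blk_of_mem_Blks (hs B'), h]

lemma Blks_pairwise_disjoint :
    Pairwise (Function.onFun Disjoint (fun B : Blks ι => B.val)) := by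
  intro B B' hne
  have hv : B.val ≠ B'.val := fun h => hne (Subtype.ext h)
  show Disjoint B.val B'.val
  obtain ⟨i, hi⟩ := B.prop
  obtain ⟨j, hj⟩ := B'.prop
  rw [← hi, ← hj] at hv ⊢
  exact Blk_disjoint hv

lemma iUnion_Blks : ⋃ B : Blks ι, B.val = (univ : Set ι) := by
  apply Set.eq_univ_of_forall
  intro i
  exact Set.mem_iUnion.2 ⟨⟨Blk i, Set.mem_range_self i⟩, mem_Blk_self i⟩

lemma sum_Blks (μm : Measure ι) [IsProbabilityMeasure μm] :
    ∑' B : Blks ι, μm B.val = 1 := by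
  rw [← measure_iUnion Blks_pairwise_disjoint (fun B => by
    obtain ⟨i, hi⟩ := B.prop
    rw [← hi]; exact Blk_meas i)]
  rw [iUnion_Blks]
  exact measure_univ

/-- collapse map along a selection -/
noncomputable def collapse (s : Blks ι → ι) : ι → ι := fun i =>
  s ⟨Blk i, Set.mem_range_self i⟩

lemma collapse_mem_Blk {s : Blks ι → ι} (hs : ∀ B, s B ∈ B.val) (i : ι) :
    collapse s i ∈ Blk i := hs ⟨Blk i, Set.mem_range_self i⟩

lemma Blk_collapse {s : Blks ι → ι} (hs : ∀ B, s B ∈ B.val) (i : ι) :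
    Blk (collapse s i) = Blk i := Blk_eq_of_mem (collapse_mem_Blk hs i)

lemma collapse_congr (s : Blks ι → ι) {i j : ι} (h : Blk i = Blk j) :
    collapse s i = collapse s j := by
  unfold collapse
  congr 1
  exact Subtype.ext h

lemma collapse_sel_self (i₀ : ι) : collapse (sel i₀) i₀ = i₀ := sel_self i₀

lemma measurable_collapse {s : Blks ι → ι} (hs : ∀ B, s B ∈ B.val) :
    Measurable (collapse s) := by
  intro S hS
  have : collapse s ⁻¹' S = ⋃ (i : ι) (_ : collapse s i ∈ S), Blk i := by
    ext x
    simp only [Set.mem_preimage, Set.mem_iUnion]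
    constructor
    · intro hx
      exact ⟨x, hx, mem_Blk_self x⟩
    · rintro ⟨i, hiS, hxi⟩
      rwa [collapse_congr s (Blk_eq_of_mem hxi)]
  rw [this]
  exact MeasurableSet.iUnion fun i => MeasurableSet.iUnion fun _ => Blk_meas i

end Blocks


section QFacts

variable {ι : Type*} [MeasurableSpace ι] [Countable ι]
variable {μm : Measure ι} {Q : Measure (ℕ → ι)}

lemma nonempty_iota [IsProbabilityMeasure μm] : Nonempty ι := by
  by_contra h
  have : IsEmpty ι := not_nonempty_iff.1 h
  have h1 : (univ : Set ι) = ∅ := Set.univ_eq_empty_iff.2 this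
  have h2 : μm univ = 1 := measure_univ
  rw [h1, measure_empty] at h2
  exact zero_ne_one h2

variable (hQ : ∀ (n : ℕ) (c : ℕ → ι),
    Q {ω : ℕ → ι | ∀ k < n, ω k = c k} = ∏ k ∈ Finset.range n, μm {c k})

include hQ in
lemma Q_univ [IsProbabilityMeasure μm] : Q univ = 1 := by
  have hne : Nonempty ι := nonempty_iota (μm := μm)
  obtain ⟨i⟩ := hne
  have := hQ 0 (fun _ => i)
  simpa using this

/-- block cylinders -/
def BC (n : ℕ) (u : Fin n → Blks ι) : Set (ℕ → ι) :=
  {ω | ∀ k : Fin n, ω (k : ℕ) ∈ (u k).val}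

lemma Blks_val_meas (B : Blks ι) : MeasurableSet B.val := by
  obtain ⟨i, hi⟩ := B.prop
  rw [← hi]; exact Blk_meas i

lemma BC_meas (n : ℕ) (u : Fin n → Blks ι) : MeasurableSet (BC n u) := by
  have : BC n u = ⋂ k : Fin n, (fun ω : ℕ → ι => ω (k : ℕ)) ⁻¹' (u k).val := by
    ext ω; simp [BC, Set.mem_iInter]
  rw [this]
  exact MeasurableSet.iInter fun k => (measurable_pi_apply _) (Blks_val_meas (u k))

/-- weight of a block word -/
noncomputable def wt (μm : Measure ι) (n : ℕ) (u : Fin n → Blks ι) : ℝ≥0∞ :=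
  ∏ k : Fin n, μm (u k).val

lemma BC_disjoint {n : ℕ} {u u' : Fin n → Blks ι} (h : u ≠ u') :
    Disjoint (BC n u) (BC n u') := by
  rw [Set.disjoint_left]
  intro ω hω hω'
  apply h
  funext k
  apply Subtype.ext
  rw [← Blk_of_mem_Blks (hω k), ← Blk_of_mem_Blks (hω' k)]

lemma BC_cover (n : ℕ) : ⋃ u : Fin n → Blks ι, BC n u = univ := by
  apply Set.eq_univ_of_forall
  intro ω
  exact Set.mem_iUnion.2 ⟨fun k => ⟨Blk (ω k), Set.mem_range_self _⟩,
    fun k => mem_Blk_self (ω (k : ℕ))⟩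

lemma sum_wt (μm : Measure ι) [IsProbabilityMeasure μm] (n : ℕ) :
    ∑' u : Fin n → Blks ι, wt μm n u = 1 := by
  induction n with
  | zero =>
      have : ∀ u : Fin 0 → Blks ι, wt μm 0 u = 1 := by
        intro u; simp [wt]
      rw [tsum_eq_single (fun k => k.elim0) ?_]
      · exact this _
      · intro u hu
        exact absurd (funext fun k => k.elim0) (Ne.symm hu)
  | succ n ih =>
      obtain ⟨e, he⟩ : ∃ e : (Fin (n+1) → Blks ι) ≃ Blks ι × (Fin n → Blks ι),
          ∀ p, e.symm p = (Fin.last n).insertNth p.1 p.2 :=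
        ⟨(Fin.insertNthEquiv (fun _ : Fin (n+1) => Blks ι) (Fin.last n)).symm,
          fun p => rfl⟩
      rw [← e.symm.tsum_eq (fun u => wt μm (n+1) u)]
      have hval : ∀ p : Blks ι × (Fin n → Blks ι),
          wt μm (n+1) (e.symm p) = μm p.1.val * wt μm n p.2 := by
        rintro ⟨B, v⟩
        have hsymm : e.symm (B, v) = (Fin.last n).insertNth B v := he (B, v)
        have hsnoc : ((Fin.last n).insertNth B v : Fin (n+1) → Blks ι) = Fin.snoc v B := by
          exact Fin.insertNth_last' B v
        rw [hsymm, hsnoc]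
        unfold wt
        rw [Fin.prod_univ_castSucc]
        simp only [Fin.snoc_castSucc, Fin.snoc_last]
        rw [mul_comm]
      calc ∑' p : Blks ι × (Fin n → Blks ι), wt μm (n+1) (e.symm p)
          = ∑' p : Blks ι × (Fin n → Blks ι), μm p.1.val * wt μm n p.2 := by
            exact tsum_congr hval
        _ = ∑' B : Blks ι, ∑' v : Fin n → Blks ι, μm B.val * wt μm n v := ENNReal.tsum_prod'
        _ = ∑' B : Blks ι, μm B.val * ∑' v : Fin n → Blks ι, wt μm n v := by
            refine tsum_congr fun B => ?_
            rw [ENNReal.tsum_mul_left]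
        _ = 1 := by
            simp only [ih, mul_one]
            exact sum_Blks μm

include hQ in
lemma Q_BC_ge [IsProbabilityMeasure μm] (n : ℕ) (u : Fin n → Blks ι) :
    wt μm n u ≤ Q (BC n u) := by
  haveI : Nonempty ι := nonempty_iota (μm := μm)
  classical
  set c : ℕ → ι := fun k => if h : k < n then s0 (u ⟨k, h⟩) else Classical.arbitrary ι with hc
  have hsub : {ω : ℕ → ι | ∀ k < n, ω k = c k} ⊆ BC n u := by
    intro ω hω k
    have h1 := hω (k : ℕ) k.isLt
    rw [h1, hc]
    simp only [k.isLt, dif_pos]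
    exact s0_mem _
  calc wt μm n u = ∏ k : Fin n, μm (u k).val := rfl
    _ = ∏ k : Fin n, μm {c (k : ℕ)} := by
        refine Finset.prod_congr rfl fun k _ => ?_
        have hck : c (k : ℕ) = s0 (u k) := by
          simp only [hc, k.isLt, dif_pos, Fin.eta]
        rw [hck]
        exact (mu_mem_Blks μm (s0_mem (u k))).symm
    _ = ∏ k ∈ Finset.range n, μm {c k} := Fin.prod_univ_eq_prod_range (fun k => μm {c k}) n
    _ = Q {ω : ℕ → ι | ∀ k < n, ω k = c k} := (hQ n c).symm
    _ ≤ Q (BC n u) := measure_mono hsub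

end QFacts


section QFacts2

variable {ι : Type*} [MeasurableSpace ι] [Countable ι]
variable {μm : Measure ι} {Q : Measure (ℕ → ι)}
variable (hQ : ∀ (n : ℕ) (c : ℕ → ι),
    Q {ω : ℕ → ι | ∀ k < n, ω k = c k} = ∏ k ∈ Finset.range n, μm {c k})


/-- squeeze lemma: pointwise `≤` plus equal finite total sums forces equality -/
lemma tsum_squeeze {α : Type*} {f g : α → ℝ≥0∞} (hle : ∀ a, f a ≤ g a)
    (hsum : ∑' a, g a ≤ ∑' a, f a) (hne : ∑' a, f a ≠ ⊤) (a₀ : α) : f a₀ = g a₀ := by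
  classical
  by_contra hne0
  have hlt : f a₀ < g a₀ := lt_of_le_of_ne (hle a₀) hne0
  have h1 : ∑' a, f a = f a₀ + ∑' a, if a = a₀ then 0 else f a :=
    ENNReal.tsum_eq_add_tsum_ite a₀
  have h2 : ∑' a, g a = g a₀ + ∑' a, if a = a₀ then 0 else g a :=
    ENNReal.tsum_eq_add_tsum_ite a₀
  have hTle : (∑' a, if a = a₀ then 0 else f a) ≤ ∑' a, if a = a₀ then 0 else g a := by
    apply ENNReal.tsum_le_tsum
    intro a
    split
    · exact le_rfl
    · exact hle a
  have hTg_le : (∑' a, if a = a₀ then 0 else g a) ≤ ∑' a, g a := by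
    apply ENNReal.tsum_le_tsum
    intro a
    split
    · exact zero_le
    · exact le_rfl
  have hTg_ne : (∑' a, if a = a₀ then 0 else g a) ≠ ⊤ :=
    (lt_of_le_of_lt (le_trans hTg_le hsum) hne.lt_top).ne
  have hcon : ∑' a, f a < ∑' a, g a := by
    rw [h1, h2]
    calc f a₀ + ∑' a, (if a = a₀ then 0 else f a)
        ≤ f a₀ + ∑' a, (if a = a₀ then 0 else g a) := add_le_add le_rfl hTle
      _ < g a₀ + ∑' a, (if a = a₀ then 0 else g a) := ENNReal.add_lt_add_right hTg_ne hlt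
  exact absurd hsum (not_le.2 hcon)

include hQ in
lemma sum_Q_BC [IsProbabilityMeasure μm] (n : ℕ) :
    ∑' u : Fin n → Blks ι, Q (BC n u) = 1 := by
  rw [← measure_iUnion (fun u u' h => BC_disjoint h) (fun u => BC_meas n u)]
  rw [BC_cover n]
  exact Q_univ hQ

include hQ in
lemma Q_BC [IsProbabilityMeasure μm] (n : ℕ) (u : Fin n → Blks ι) :
    Q (BC n u) = wt μm n u := by
  refine (tsum_squeeze (f := fun u => wt μm n u) (g := fun u => Q (BC n u))
    (fun u => Q_BC_ge hQ n u) ?_ ?_ u).symm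
  · rw [sum_Q_BC hQ n, sum_wt μm n]
  · rw [sum_wt μm n]; exact ENNReal.one_ne_top

/-- the collapse map on sequences -/
noncomputable def Kmap (s : Blks ι → ι) : (ℕ → ι) → (ℕ → ι) := fun ω k => collapse s (ω k)

lemma measurable_Kmap {s : Blks ι → ι} (hs : ∀ B, s B ∈ B.val) : Measurable (Kmap s) :=
  measurable_pi_lambda _ fun k => (measurable_collapse hs).comp (measurable_pi_apply k)

lemma Kmap_preimage_BC {s : Blks ι → ι} (hs : ∀ B, s B ∈ B.val) (n : ℕ)
    (u : Fin n → Blks ι) : Kmap s ⁻¹' (BC n u) = BC n u := by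
  ext ω
  simp only [Set.mem_preimage, BC, Set.mem_setOf_eq, Kmap]
  constructor
  · intro h k
    have h2 : collapse s (ω (k : ℕ)) ∈ Blk (ω (k : ℕ)) :=
      hs ⟨Blk (ω (k : ℕ)), Set.mem_range_self _⟩
    have h3 : Blk (collapse s (ω (k : ℕ))) = Blk (ω (k : ℕ)) := Blk_eq_of_mem h2
    have h4 : Blk (collapse s (ω (k : ℕ))) = (u k).val := Blk_of_mem_Blks (h k)
    rw [← h4, h3]
    exact mem_Blk_self _
  · intro h k
    have h2 : Blk (ω (k : ℕ)) = (u k).val := Blk_of_mem_Blks (h k)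
    have h3 : collapse s (ω (k : ℕ)) ∈ Blk (ω (k : ℕ)) :=
      hs ⟨Blk (ω (k : ℕ)), Set.mem_range_self _⟩
    rw [← h2]
    exact h3

/-- the family of block cylinders -/
def BCfam (ι : Type*) [MeasurableSpace ι] : Set (Set (ℕ → ι)) :=
  {S | ∃ n : ℕ, ∃ u : Fin n → Blks ι, S = BC n u}

lemma isPiSystem_BCfam : IsPiSystem (BCfam ι) := by
  rintro S ⟨n, u, rfl⟩ T ⟨m, v, rfl⟩ hne
  rcases le_total n m with h | h
  · -- nonempty intersection: u agrees with v on the first n coordinates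
    obtain ⟨ω, hω1, hω2⟩ := hne
    have hagree : ∀ k : Fin n, u k = v ⟨(k : ℕ), lt_of_lt_of_le k.isLt h⟩ := by
      intro k
      apply Subtype.ext
      rw [← Blk_of_mem_Blks (hω1 k), ← Blk_of_mem_Blks (hω2 ⟨(k : ℕ), lt_of_lt_of_le k.isLt h⟩)]
    have : BC n u ∩ BC m v = BC m v := by
      apply Set.inter_eq_self_of_subset_right
      intro ω' hω' k
      rw [hagree k]
      exact hω' ⟨(k : ℕ), lt_of_lt_of_le k.isLt h⟩
    rw [this]
    exact ⟨m, v, rfl⟩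
  · obtain ⟨ω, hω1, hω2⟩ := hne
    have hagree : ∀ k : Fin m, v k = u ⟨(k : ℕ), lt_of_lt_of_le k.isLt h⟩ := by
      intro k
      apply Subtype.ext
      rw [← Blk_of_mem_Blks (hω2 k), ← Blk_of_mem_Blks (hω1 ⟨(k : ℕ), lt_of_lt_of_le k.isLt h⟩)]
    have : BC n u ∩ BC m v = BC n u := by
      apply Set.inter_eq_self_of_subset_left
      intro ω' hω' k
      rw [hagree k]
      exact hω' ⟨(k : ℕ), lt_of_lt_of_le k.isLt h⟩
    rw [this]
    exact ⟨n, u, rfl⟩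

lemma univ_mem_BCfam : (univ : Set (ℕ → ι)) ∈ BCfam ι := by
  refine ⟨0, fun k => k.elim0, ?_⟩
  apply Set.eq_univ_of_forall (fun ω => ?_) |>.symm
  intro k
  exact k.elim0

lemma pi_eq_generateFrom_BCfam :
    (inferInstance : MeasurableSpace (ℕ → ι)) = .generateFrom (BCfam ι) := by
  apply le_antisymm
  · -- pi ≤ generated
    rw [show (inferInstance : MeasurableSpace (ℕ → ι)) = MeasurableSpace.pi from rfl]
    apply iSup_le
    intro k
    rw [MeasurableSpace.comap_le_iff_le_map]
    intro S hS
    -- S measurable in ι; show eval k ⁻¹' S is generated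
    show MeasurableSet[MeasurableSpace.generateFrom (BCfam ι)] ((fun ω : ℕ → ι => ω k) ⁻¹' S)
    have hdecomp : (fun ω : ℕ → ι => ω k) ⁻¹' S = ⋃ (i : ι) (_ : i ∈ S),
        (fun ω : ℕ → ι => ω k) ⁻¹' (Blk i) := by
      conv_lhs => rw [meas_eq_iUnion_Blk hS]
      simp [Set.preimage_iUnion]
    rw [hdecomp]
    apply MeasurableSet.iUnion
    intro i
    apply MeasurableSet.iUnion
    intro _
    -- eval k ⁻¹' (Blk i) as a countable union of block cylinders
    have hBlk : (fun ω : ℕ → ι => ω k) ⁻¹' (Blk i) =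
        ⋃ (u : {u : Fin (k+1) → Blks ι // u (Fin.last k) = ⟨Blk i, Set.mem_range_self i⟩}),
          BC (k+1) u.val := by
      ext ω
      simp only [Set.mem_preimage, Set.mem_iUnion]
      constructor
      · intro hω
        refine ⟨⟨fun j => ⟨Blk (ω (j : ℕ)), Set.mem_range_self _⟩, ?_⟩, ?_⟩
        · apply Subtype.ext
          show Blk (ω ((Fin.last k : Fin (k+1)) : ℕ)) = Blk i
          rw [Fin.val_last]
          exact Blk_eq_of_mem hω
        · intro j
          exact mem_Blk_self _
      · rintro ⟨⟨u, hu⟩, hω⟩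
        have h1 : ω ((Fin.last k : Fin (k+1)) : ℕ) ∈ (u (Fin.last k)).val := hω (Fin.last k)
        rw [hu, Fin.val_last] at h1
        exact h1
    rw [hBlk]
    apply MeasurableSet.iUnion
    intro u
    exact MeasurableSpace.measurableSet_generateFrom ⟨k+1, u.val, rfl⟩
  · -- generated ≤ pi
    apply MeasurableSpace.generateFrom_le
    rintro S ⟨n, u, rfl⟩
    exact BC_meas n u

include hQ in
lemma Qmap_eq [IsProbabilityMeasure μm] {s : Blks ι → ι} (hs : ∀ B, s B ∈ B.val) :
    Q.map (Kmap s) = Q := by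
  haveI : IsProbabilityMeasure Q := ⟨Q_univ hQ⟩
  apply MeasureTheory.ext_of_generate_finite (BCfam ι) pi_eq_generateFrom_BCfam
    isPiSystem_BCfam
  · rintro S ⟨n, u, rfl⟩
    rw [Measure.map_apply (measurable_Kmap hs) (BC_meas n u), Kmap_preimage_BC hs n u]
  · rw [Measure.map_apply (measurable_Kmap hs) MeasurableSet.univ]
    simp

section Diverge

variable {G : ι → ℝ → ℝ}

variable [Nonempty ι]

noncomputable def lets (s : Blks ι → ι) (n : ℕ) (u : Fin n → Blks ι) : ℕ → ι :=
  fun k => if h : k < n then s (u ⟨k, h⟩) else Classical.arbitrary ι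

lemma chain_congr (G : ι → ℝ → ℝ) (x : ℝ) : ∀ (n : ℕ) {ω ω' : ℕ → ι},
    (∀ k < n, ω k = ω' k) → chain G ω x n = chain G ω' x n := by
  intro n
  induction n with
  | zero => intro ω ω' _; rfl
  | succ n ih =>
      intro ω ω' h
      show G (ω n) (chain G ω x n) = G (ω' n) (chain G ω' x n)
      rw [h n (Nat.lt_succ_self n), ih (fun k hk => h k (hk.trans (Nat.lt_succ_self n)))]

/-- `u` is a "good" block word: the associated selected composition carries `z`
into `[a,b]` at time `n` -/
def Sgood (G : ι → ℝ → ℝ) (s : Blks ι → ι) (a b z : ℝ) (n : ℕ) (u : Fin n → Blks ι) : Prop :=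
  chain G (lets s n u) z n ∈ Icc a b

/-- the event that the collapsed chain is in `[a,b]` at time `n` -/
def Eset (G : ι → ℝ → ℝ) (s : Blks ι → ι) (a b z : ℝ) (n : ℕ) : Set (ℕ → ι) :=
  {ω | chain G (Kmap s ω) z n ∈ Icc a b}

lemma Kmap_eq_lets {s : Blks ι → ι} (hs : ∀ B, s B ∈ B.val) {n : ℕ} {u : Fin n → Blks ι}
    {ω : ℕ → ι} (hω : ω ∈ BC n u) : ∀ k < n, Kmap s ω k = lets s n u k := by
  intro k hk
  have h1 : ω k ∈ (u ⟨k, hk⟩).val := hω ⟨k, hk⟩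
  have h2 : Blk (ω k) = (u ⟨k, hk⟩).val := Blk_of_mem_Blks h1
  show collapse s (ω k) = lets s n u k
  unfold collapse lets
  rw [dif_pos hk]
  congr 1
  exact Subtype.ext h2

open scoped Classical in
lemma Eset_eq (s : Blks ι → ι) (hs : ∀ B, s B ∈ B.val) (a b z : ℝ) (n : ℕ) :
    Eset G s a b z n =
      ⋃ u : Fin n → Blks ι, if Sgood G s a b z n u then BC n u else ∅ := by
  ext ω
  simp only [Eset, Set.mem_setOf_eq, Set.mem_iUnion]
  constructor
  · intro h
    set u : Fin n → Blks ι := fun j => ⟨Blk (ω (j : ℕ)), Set.mem_range_self _⟩ with hu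
    have hωu : ω ∈ BC n u := fun j => mem_Blk_self _
    have hgood : Sgood G s a b z n u := by
      unfold Sgood
      rw [← chain_congr G z n (Kmap_eq_lets hs hωu)]
      exact h
    exact ⟨u, by rw [if_pos hgood]; exact hωu⟩
  · rintro ⟨u, hmem⟩
    by_cases hgood : Sgood G s a b z n u
    · rw [if_pos hgood] at hmem
      rw [chain_congr G z n (Kmap_eq_lets hs hmem)]
      exact hgood
    · rw [if_neg hgood] at hmem
      exact absurd hmem (Set.notMem_empty ω)

open scoped Classical in
include hQ in
lemma Q_Eset [IsProbabilityMeasure μm] (s : Blks ι → ι) (hs : ∀ B, s B ∈ B.val)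
    (a b z : ℝ) (n : ℕ) :
    Q (Eset G s a b z n) =
      ∑' u : Fin n → Blks ι, if Sgood G s a b z n u then wt μm n u else 0 := by
  rw [Eset_eq s hs a b z n]
  rw [measure_iUnion ?_ ?_]
  · refine tsum_congr fun u => ?_
    split
    · exact Q_BC hQ n u
    · exact measure_empty
  · intro u u' hne
    show Disjoint (if Sgood G s a b z n u then BC n u else ∅)
      (if Sgood G s a b z n u' then BC n u' else ∅)
    by_cases h1 : Sgood G s a b z n u
    · by_cases h2 : Sgood G s a b z n u'
      · rw [if_pos h1, if_pos h2]
        show Disjoint (BC n u) (BC n u')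
        exact BC_disjoint hne
      · rw [if_neg h2]
        show Disjoint _ ∅
        exact disjoint_bot_right
    · rw [if_neg h1]
      show Disjoint ∅ _
      exact disjoint_bot_left
  · intro u
    split
    · exact BC_meas n u
    · exact MeasurableSet.empty

include hQ in
lemma divergence [IsProbabilityMeasure μm] (s : Blks ι → ι) (hs : ∀ B, s B ∈ B.val)
    (a b z : ℝ) (hRz : ∀ᵐ ω ∂Q, ∃ᶠ n in atTop, chain G ω z n ∈ Icc a b) :
    ∑' n : ℕ, Q (Eset G s a b z n) = ⊤ := by
  have hae : ∀ᵐ ω ∂Q, ∃ᶠ n in atTop, chain G (Kmap s ω) z n ∈ Icc a b := by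
    have h2 : ∀ᵐ ω' ∂(Q.map (Kmap s)), ∃ᶠ n in atTop, chain G ω' z n ∈ Icc a b := by
      rw [Qmap_eq hQ hs]
      exact hRz
    exact ae_of_ae_map (measurable_Kmap hs).aemeasurable h2
  have htail : ∀ N : ℕ, 1 ≤ ∑' m : ℕ, Q (Eset G s a b z (m + N)) := by
    intro N
    have hsub : {ω | ∃ᶠ n in atTop, chain G (Kmap s ω) z n ∈ Icc a b}
        ⊆ ⋃ m : ℕ, Eset G s a b z (m + N) := by
      intro ω hω
      obtain ⟨n, hn, hmem⟩ := frequently_atTop.1 hω N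
      refine Set.mem_iUnion.2 ⟨n - N, ?_⟩
      show chain G (Kmap s ω) z (n - N + N) ∈ Icc a b
      rwa [show n - N + N = n from by omega]
    calc (1 : ℝ≥0∞) = Q univ := (Q_univ hQ).symm
      _ ≤ Q {ω | ¬ (∃ᶠ n in atTop, chain G (Kmap s ω) z n ∈ Icc a b)}
          + Q (⋃ m : ℕ, Eset G s a b z (m + N)) := by
          refine le_trans (measure_mono ?_) (measure_union_le _ _)
          intro ω _
          by_cases hω : ∃ᶠ n in atTop, chain G (Kmap s ω) z n ∈ Icc a b
          · exact Set.mem_union_right _ (hsub hω)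
          · exact Set.mem_union_left _ hω
      _ = Q (⋃ m : ℕ, Eset G s a b z (m + N)) := by
          rw [ae_iff.1 hae, zero_add]
      _ ≤ ∑' m : ℕ, Q (Eset G s a b z (m + N)) := measure_iUnion_le _
  by_contra hne
  have htend := ENNReal.tendsto_sum_nat_add (fun n => Q (Eset G s a b z n)) hne
  rw [ENNReal.tendsto_atTop_zero] at htend
  obtain ⟨N, hN⟩ := htend (1/2) (by norm_num)
  have h1 := htail N
  have h2 := hN N le_rfl
  have : (1 : ℝ≥0∞) ≤ 1/2 := le_trans h1 h2
  norm_num at this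

end Diverge

end QFacts2


section Engine

open scoped Classical

variable {ι : Type*} [MeasurableSpace ι] [Countable ι] [Nonempty ι]
variable {G : ι → ℝ → ℝ} {μm : Measure ι} {ν : Measure ℝ}
variable [IsProbabilityMeasure μm]
variable (hmono : ∀ i, StrictMono (G i)) (hsurj : ∀ i, Surjective (G i))
variable (hrad : ∀ K : Set ℝ, IsCompact K → ν K < ⊤)
variable (t : ℝ≥0∞) (ht0 : t ≠ 0) (httop : t ≠ ⊤)

/-- the truncated mass function -/
noncomputable def theta (ν : Measure ℝ) (t : ℝ≥0∞) : ℝ → ℝ≥0∞ := fun x => min (ν {x}) t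

lemma theta_le_t (x : ℝ) : theta ν t x ≤ t := min_le_right _ _

lemma theta_le_nu (x : ℝ) : theta ν t x ≤ ν {x} := min_le_left _ _

variable (hkey : ∀ y : ℝ, ∑' i : ι, μm {i} * ν {iv G i y} ≤ ν {y})
variable {s : Blks ι → ι} (hs : ∀ B, s B ∈ B.val)

include hkey hs in
lemma superinv (y : ℝ) :
    ∑' B : Blks ι, μm B.val * theta ν t (iv G (s B) y) ≤ theta ν t y := by
  apply le_min
  · -- bound by ν {y}
    calc ∑' B : Blks ι, μm B.val * theta ν t (iv G (s B) y)
        ≤ ∑' B : Blks ι, μm B.val * ν {iv G (s B) y} := by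
          exact ENNReal.tsum_le_tsum fun B => mul_le_mul_right (theta_le_nu t _) _
      _ = ∑' B : Blks ι, μm {s B} * ν {iv G (s B) y} := by
          exact tsum_congr fun B => by rw [mu_mem_Blks μm (hs B)]
      _ ≤ ∑' i : ι, μm {i} * ν {iv G i y} :=
          ENNReal.tsum_comp_le_tsum_of_injective (sel_inj hs)
            (fun i => μm {i} * ν {iv G i y})
      _ ≤ ν {y} := hkey y
  · calc ∑' B : Blks ι, μm B.val * theta ν t (iv G (s B) y)
        ≤ ∑' B : Blks ι, μm B.val * t := by
          exact ENNReal.tsum_le_tsum fun B => mul_le_mul_right (theta_le_t t _) _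
      _ = (∑' B : Blks ι, μm B.val) * t := ENNReal.tsum_mul_right
      _ = t := by rw [sum_Blks μm, one_mul]

/-- the defect function -/
noncomputable def eta (G : ι → ℝ → ℝ) (μm : Measure ι) (ν : Measure ℝ) (t : ℝ≥0∞)
    (s : Blks ι → ι) : ℝ → ℝ≥0∞ := fun y =>
  theta ν t y - ∑' B : Blks ι, μm B.val * theta ν t (iv G (s B) y)

include hkey hs in
lemma eta_add (y : ℝ) :
    (∑' B : Blks ι, μm B.val * theta ν t (iv G (s B) y)) + eta G μm ν t s y
      = theta ν t y := add_tsub_cancel_of_le (superinv t hkey hs y)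

lemma eta_le_theta (y : ℝ) : eta G μm ν t s y ≤ theta ν t y := tsub_le_self

/-- the level sums of defects collected along the backward tree -/
noncomputable def V (G : ι → ℝ → ℝ) (μm : Measure ι) (ν : Measure ℝ) (t : ℝ≥0∞)
    (s : Blks ι → ι) : ℕ → ℝ → ℝ≥0∞
  | 0 => fun y => eta G μm ν t s y
  | n + 1 => fun y => ∑' B : Blks ι, μm B.val * V G μm ν t s n (iv G (s B) y)

include hkey hs in
lemma sum_V_le (N : ℕ) : ∀ y : ℝ,
    ∑ n ∈ Finset.range N, V G μm ν t s n y ≤ theta ν t y := by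
  induction N with
  | zero => intro y; simp
  | succ N ih =>
      intro y
      rw [Finset.sum_range_succ']
      have h1 : ∑ n ∈ Finset.range N, V G μm ν t s (n + 1) y
          = ∑' B : Blks ι, μm B.val * ∑ n ∈ Finset.range N, V G μm ν t s n (iv G (s B) y) := by
        have h2 : ∀ n ∈ Finset.range N, Summable (fun B : Blks ι =>
            μm B.val * V G μm ν t s n (iv G (s B) y)) := fun _ _ => ENNReal.summable
        calc ∑ n ∈ Finset.range N, V G μm ν t s (n + 1) y
            = ∑ n ∈ Finset.range N, ∑' B : Blks ι,
                μm B.val * V G μm ν t s n (iv G (s B) y) := rfl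
          _ = ∑' B : Blks ι, ∑ n ∈ Finset.range N,
                μm B.val * V G μm ν t s n (iv G (s B) y) := (Summable.tsum_finsetSum h2).symm
          _ = ∑' B : Blks ι, μm B.val * ∑ n ∈ Finset.range N,
                V G μm ν t s n (iv G (s B) y) := by
              exact tsum_congr fun B => (Finset.mul_sum _ _ _).symm
      rw [h1]
      calc (∑' B : Blks ι, μm B.val * ∑ n ∈ Finset.range N, V G μm ν t s n (iv G (s B) y))
            + V G μm ν t s 0 y
          ≤ (∑' B : Blks ι, μm B.val * theta ν t (iv G (s B) y)) + eta G μm ν t s y := by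
            refine add_le_add (ENNReal.tsum_le_tsum fun B =>
              mul_le_mul_right (ih _) _) le_rfl
        _ = theta ν t y := eta_add t hkey hs y

/-- the backward point along a block word -/
noncomputable def bk (G : ι → ℝ → ℝ) (s : Blks ι → ι) : ∀ n : ℕ, (Fin n → Blks ι) → ℝ → ℝ
  | 0 => fun _ y => y
  | n + 1 => fun u y => bk G s n (u ∘ Fin.castSucc) (iv G (s (u (Fin.last n))) y)

lemma V_eq (n : ℕ) : ∀ y : ℝ,
    V G μm ν t s n y = ∑' u : Fin n → Blks ι, wt μm n u * eta G μm ν t s (bk G s n u y) := by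
  induction n with
  | zero =>
      intro y
      have : ∀ u : Fin 0 → Blks ι, wt μm 0 u * eta G μm ν t s (bk G s 0 u y)
          = eta G μm ν t s y := by
        intro u; simp [wt, bk]
      rw [tsum_eq_single (fun k => k.elim0) ?_]
      · rw [this]; rfl
      · intro u hu
        exact absurd (funext fun k => k.elim0) (Ne.symm hu)
  | succ n ih =>
      intro y
      obtain ⟨e, he⟩ : ∃ e : (Fin (n+1) → Blks ι) ≃ Blks ι × (Fin n → Blks ι),
          ∀ p, e.symm p = (Fin.last n).insertNth p.1 p.2 :=
        ⟨(Fin.insertNthEquiv (fun _ : Fin (n+1) => Blks ι) (Fin.last n)).symm,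
          fun p => rfl⟩
      rw [show V G μm ν t s (n+1) y
          = ∑' B : Blks ι, μm B.val * V G μm ν t s n (iv G (s B) y) from rfl]
      rw [← e.symm.tsum_eq (fun u => wt μm (n+1) u * eta G μm ν t s (bk G s (n+1) u y))]
      symm
      have hval : ∀ p : Blks ι × (Fin n → Blks ι),
          wt μm (n+1) (e.symm p) * eta G μm ν t s (bk G s (n+1) (e.symm p) y)
            = μm p.1.val * (wt μm n p.2 * eta G μm ν t s (bk G s n p.2 (iv G (s p.1) y))) := by
        rintro ⟨B, v⟩
        have hsymm : e.symm (B, v) = Fin.snoc v B := by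
          rw [he (B, v)]; exact Fin.insertNth_last' B v
        rw [hsymm]
        have hwt : wt μm (n+1) (Fin.snoc v B) = wt μm n v * μm B.val := by
          unfold wt
          rw [Fin.prod_univ_castSucc]
          simp only [Fin.snoc_castSucc, Fin.snoc_last]
        have hbk : bk G s (n+1) (Fin.snoc v B) y = bk G s n v (iv G (s B) y) := by
          have h1 : ((Fin.snoc v B : Fin (n+1) → Blks ι) ∘ Fin.castSucc) = v := by
            funext k
            simp [Fin.snoc_castSucc]
          have h2 : (Fin.snoc v B : Fin (n+1) → Blks ι) (Fin.last n) = B :=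
            Fin.snoc_last _ _
          calc bk G s (n+1) (Fin.snoc v B) y
              = bk G s n ((Fin.snoc v B : Fin (n+1) → Blks ι) ∘ Fin.castSucc)
                  (iv G (s ((Fin.snoc v B : Fin (n+1) → Blks ι) (Fin.last n))) y) := rfl
            _ = bk G s n v (iv G (s B) y) := by rw [h1, h2]
        rw [hwt, hbk]
        ring
      calc ∑' p : Blks ι × (Fin n → Blks ι),
            wt μm (n+1) (e.symm p) * eta G μm ν t s (bk G s (n+1) (e.symm p) y)
          = ∑' p : Blks ι × (Fin n → Blks ι),
              μm p.1.val * (wt μm n p.2 * eta G μm ν t s (bk G s n p.2 (iv G (s p.1) y))) :=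
            tsum_congr hval
        _ = ∑' B : Blks ι, ∑' v : Fin n → Blks ι,
              μm B.val * (wt μm n v * eta G μm ν t s (bk G s n v (iv G (s B) y))) :=
            ENNReal.tsum_prod'
        _ = ∑' B : Blks ι, μm B.val * V G μm ν t s n (iv G (s B) y) := by
            refine tsum_congr fun B => ?_
            rw [ENNReal.tsum_mul_left, ih (iv G (s B) y)]

include hmono in
lemma bk_chain (n : ℕ) : ∀ (u : Fin n → Blks ι) (z : ℝ),
    bk G s n u (chain G (lets s n u) z n) = z := by
  induction n with
  | zero => intro u z; rfl
  | succ n ih =>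
      intro u z
      have hstep : chain G (lets s (n+1) u) z (n+1)
          = G (s (u (Fin.last n))) (chain G (lets s n (u ∘ Fin.castSucc)) z n) := by
        show G (lets s (n+1) u n) (chain G (lets s (n+1) u) z n) = _
        have h1 : lets s (n+1) u n = s (u (Fin.last n)) := by
          unfold lets
          rw [dif_pos (Nat.lt_succ_self n)]
          rfl
        have h2 : chain G (lets s (n+1) u) z n = chain G (lets s n (u ∘ Fin.castSucc)) z n := by
          apply chain_congr G z n
          intro k hk
          unfold lets
          rw [dif_pos hk, dif_pos (hk.trans (Nat.lt_succ_self n))]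
          rfl
        rw [h1, h2]
      rw [hstep]
      show bk G s n (u ∘ Fin.castSucc)
        (iv G (s (u (Fin.last n))) (G (s (u (Fin.last n)))
          (chain G (lets s n (u ∘ Fin.castSucc)) z n))) = z
      rw [iv_G (hmono _), ih]

include hmono hrad hkey hs in
lemma collection (a b z : ℝ) (N : ℕ) :
    (∑ n ∈ Finset.range N,
        ∑' u : Fin n → Blks ι, if Sgood G s a b z n u then wt μm n u else 0)
      * eta G μm ν t s z ≤ ν (Icc a b) := by
  set A : Set ℝ :=
    ⋃ n : ℕ, (fun u : Fin n → Blks ι => chain G (lets s n u) z n) '' {u | Sgood G s a b z n u}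
    with hA
  have hAcount : A.Countable :=
    Set.countable_iUnion fun n => (Set.to_countable _).image _
  have hAsub : A ⊆ Icc a b := by
    rintro x hx
    obtain ⟨n, u, hu, rfl⟩ := by
      simpa only [hA, Set.mem_iUnion, Set.mem_image, Set.mem_setOf_eq] using hx
    exact hu
  haveI : Countable ↥A := hAcount.to_subtype
  have hper : ∀ n : ℕ,
      (∑' u : Fin n → Blks ι, if Sgood G s a b z n u then wt μm n u else 0)
        * eta G μm ν t s z ≤ ∑' y : ↥A, V G μm ν t s n y.val := by
    intro n
    have h1 : (∑' u : Fin n → Blks ι, if Sgood G s a b z n u then wt μm n u else 0)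
        * eta G μm ν t s z
        = ∑' u : Fin n → Blks ι,
            (if Sgood G s a b z n u then wt μm n u * eta G μm ν t s z else 0) := by
      rw [← ENNReal.tsum_mul_right]
      refine tsum_congr fun u => ?_
      split <;> simp
    rw [h1]
    -- restrict to the subtype of good words
    have h2 : (∑' u : ↥{u : Fin n → Blks ι | Sgood G s a b z n u},
            wt μm n u.val * eta G μm ν t s z)
        = ∑' u : Fin n → Blks ι,
            (if Sgood G s a b z n u then wt μm n u * eta G μm ν t s z else 0) := by
      refine (tsum_subtype {u : Fin n → Blks ι | Sgood G s a b z n u}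
        (fun u => wt μm n u * eta G μm ν t s z)).trans ?_
      refine tsum_congr fun u => ?_
      simp only [Set.indicator_apply, Set.mem_setOf_eq]
    rw [← h2]
    have h3 : ∀ u : ↥{u : Fin n → Blks ι | Sgood G s a b z n u},
        wt μm n u.val * eta G μm ν t s z
          = wt μm n u.val * eta G μm ν t s (bk G s n u.val (chain G (lets s n u.val) z n)) := by
      intro u
      rw [bk_chain hmono n u.val z]
    calc ∑' u : ↥{u : Fin n → Blks ι | Sgood G s a b z n u},
          wt μm n u.val * eta G μm ν t s z
        = ∑' u : ↥{u : Fin n → Blks ι | Sgood G s a b z n u},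
            (fun p : ↥A × (Fin n → Blks ι) =>
              wt μm n p.2 * eta G μm ν t s (bk G s n p.2 p.1.val))
            (⟨⟨chain G (lets s n u.val) z n,
                Set.mem_iUnion.2 ⟨n, Set.mem_image_of_mem _ u.prop⟩⟩, u.val⟩) := by
          refine tsum_congr fun u => ?_
          simp only
          exact h3 u
      _ ≤ ∑' p : ↥A × (Fin n → Blks ι),
            wt μm n p.2 * eta G μm ν t s (bk G s n p.2 p.1.val) := by
          apply ENNReal.tsum_comp_le_tsum_of_injective
          intro u u' huu
          apply Subtype.ext
          exact congrArg Prod.snd huu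
      _ = ∑' y : ↥A, ∑' u : Fin n → Blks ι,
            wt μm n u * eta G μm ν t s (bk G s n u y.val) := ENNReal.tsum_prod'
      _ = ∑' y : ↥A, V G μm ν t s n y.val := by
          exact tsum_congr fun y => (V_eq t n y.val).symm
  calc (∑ n ∈ Finset.range N,
        ∑' u : Fin n → Blks ι, if Sgood G s a b z n u then wt μm n u else 0)
      * eta G μm ν t s z
      = ∑ n ∈ Finset.range N,
          (∑' u : Fin n → Blks ι, if Sgood G s a b z n u then wt μm n u else 0)
            * eta G μm ν t s z := Finset.sum_mul _ _ _
    _ ≤ ∑ n ∈ Finset.range N, ∑' y : ↥A, V G μm ν t s n y.val :=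
        Finset.sum_le_sum fun n _ => hper n
    _ = ∑' y : ↥A, ∑ n ∈ Finset.range N, V G μm ν t s n y.val :=
        (Summable.tsum_finsetSum fun _ _ => ENNReal.summable).symm
    _ ≤ ∑' y : ↥A, theta ν t y.val :=
        ENNReal.tsum_le_tsum fun y => sum_V_le t hkey hs N y.val
    _ ≤ ∑' y : ↥A, ν {y.val} := ENNReal.tsum_le_tsum fun y => theta_le_nu t y.val
    _ = ν (⋃ y : ↥A, {y.val}) := by
        rw [measure_iUnion ?_ fun y => measurableSet_singleton _]
        intro y y' hne
        simp only [Function.onFun, Set.disjoint_singleton]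
        exact fun h => hne (Subtype.ext h)
    _ ≤ ν (Icc a b) := by
        apply measure_mono
        intro x hx
        obtain ⟨y, hy⟩ := Set.mem_iUnion.1 hx
        rw [Set.mem_singleton_iff.1 hy]
        exact hAsub y.prop

include hmono hrad hkey hs in
lemma eta_zero (a b z : ℝ)
    (hdiv : ∑' n : ℕ,
      (∑' u : Fin n → Blks ι, if Sgood G s a b z n u then wt μm n u else 0) = ⊤) :
    eta G μm ν t s z = 0 := by
  by_contra hη
  have hC : ∀ N : ℕ, (∑ n ∈ Finset.range N,
      ∑' u : Fin n → Blks ι, if Sgood G s a b z n u then wt μm n u else 0)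
        * eta G μm ν t s z ≤ ν (Icc a b) := fun N => collection hmono hrad t hkey hs a b z N
  have hsup : (⨆ N : ℕ, ∑ n ∈ Finset.range N,
      ∑' u : Fin n → Blks ι, if Sgood G s a b z n u then wt μm n u else 0) = ⊤ := by
    rw [← ENNReal.tsum_eq_iSup_nat]
    exact hdiv
  have h2 : (⊤ : ℝ≥0∞) * eta G μm ν t s z ≤ ν (Icc a b) := by
    rw [← hsup, ENNReal.iSup_mul]
    exact iSup_le hC
  rw [ENNReal.top_mul hη] at h2
  exact (hrad _ isCompact_Icc).ne (top_le_iff.1 h2)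

include hmono hrad hkey hs in
lemma theta_fix (a b z : ℝ)
    (hdiv : ∑' n : ℕ,
      (∑' u : Fin n → Blks ι, if Sgood G s a b z n u then wt μm n u else 0) = ⊤) :
    ∑' B : Blks ι, μm B.val * theta ν t (iv G (s B) z) = theta ν t z := by
  refine le_antisymm (superinv t hkey hs z) ?_
  have h0 := eta_zero hmono hrad t hkey hs a b z hdiv
  exact tsub_eq_zero_iff_le.1 h0

include hmono hrad hkey hs in
lemma prop_step (a b z : ℝ) (i₀ : ι) (B₀ : Blks ι) (hB₀ : s B₀ = i₀)
    (hq0 : μm B₀.val ≠ 0) (httop : t ≠ ⊤)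
    (hdiv : ∑' n : ℕ,
      (∑' u : Fin n → Blks ι, if Sgood G s a b z n u then wt μm n u else 0) = ⊤)
    (hz : theta ν t z = t) : theta ν t (iv G i₀ z) = t := by
  by_contra hne
  have hlt : theta ν t (iv G i₀ z) < t := (theta_le_t t _).lt_of_ne hne
  have heq : ∑' B : Blks ι, μm B.val * theta ν t (iv G (s B) z) = t := by
    rw [theta_fix hmono hrad t hkey hs a b z hdiv, hz]
  have hg : ∑' B : Blks ι, μm B.val * t = t := by
    rw [ENNReal.tsum_mul_right, sum_Blks μm, one_mul]
  have hstrict : (∑' B : Blks ι, μm B.val * theta ν t (iv G (s B) z))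
      < ∑' B : Blks ι, μm B.val * t := by
    refine ENNReal.tsum_lt_tsum (i := B₀) ?_ ?_ ?_
    · rw [heq]; exact httop
    · exact fun B => mul_le_mul_right (theta_le_t t _) _
    · rw [hB₀]
      exact (ENNReal.mul_lt_mul_iff_right hq0 (measure_ne_top μm _)).2 hlt
  rw [heq, hg] at hstrict
  exact lt_irrefl t hstrict

end Engine


end AtomPf

open scoped Classical in
/-- **Lemma (measures with atoms).** Assume (R) holds with recurrence interval
`[a,b]`. If `ν` is an invariant Radon measure possessing an atom, and `K = [c,d]` is a
compact interval containing `[a,b]` and an atom of `ν`, then there is `x₀ ∈ K` whose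
orbit under the semigroup generated by the inverse maps meets `K` in a finite set. -/
theorem invariant_measure_with_atom_finite_inverse_orbit
    {ι : Type*} [Countable ι] [MeasurableSpace ι]
    (G : ι → ℝ → ℝ) (hG : ∀ i, IsOPH (G i))
    (μm : Measure ι) [IsProbabilityMeasure μm] (hpos : ∀ i, 0 < μm {i})
    (Q : Measure (ℕ → ι)) (hQ : IsProd μm Q)
    (a b : ℝ) (hab : a ≤ b)
    (hR : ∀ x : ℝ, ∀ᵐ ω ∂Q, ∃ᶠ n in atTop, chain G ω x n ∈ Icc a b)
    (ν : Measure ℝ) (hrad : IsRadon ν) (hinv : IsInv G μm ν)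
    (hatom : ∃ y : ℝ, 0 < ν {y})
    (c d : ℝ) (hK : Icc a b ⊆ Icc c d)
    (hatomK : ∃ y ∈ Icc c d, 0 < ν {y}) :
    ∃ x₀ ∈ Icc c d,
      Set.Finite {y | (∃ f ∈ sgen (fun i => Function.invFun (G i)), f x₀ = y) ∧
        y ∈ Icc c d} := by
  obtain ⟨y₀, hy₀K, hy₀⟩ := hatomK
  have hmono : ∀ i, StrictMono (G i) := fun i => (hG i).1
  have hsurj : ∀ i, Function.Surjective (G i) := fun i => (hG i).2
  haveI hne : Nonempty ι := AtomPf.nonempty_iota (μm := μm)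
  set t : ℝ≥0∞ := ν {y₀} with ht
  have ht0 : t ≠ 0 := hy₀.ne'
  have httop : t ≠ ⊤ := AtomPf.nu_pt_ne_top hrad y₀
  have hkey : ∀ y : ℝ, ∑' i : ι, μm {i} * ν {AtomPf.iv G i y} ≤ ν {y} :=
    AtomPf.key_ineq hmono hsurj hrad (fun i => measure_ne_top μm _) hinv ⟨y₀, hy₀⟩
  have hdiv : ∀ (s : AtomPf.Blks ι → ι), (∀ B, s B ∈ B.val) → ∀ z : ℝ,
      ∑' n : ℕ, (∑' u : Fin n → AtomPf.Blks ι,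
        if AtomPf.Sgood G s a b z n u then AtomPf.wt μm n u else 0) = ⊤ := by
    intro s hs z
    have h1 := AtomPf.divergence hQ s hs a b z (hR z)
    rw [← h1]
    exact tsum_congr fun n => (AtomPf.Q_Eset hQ s hs a b z n).symm
  have hstep : ∀ (i₀ : ι) (z : ℝ), AtomPf.theta ν t z = t →
      AtomPf.theta ν t (AtomPf.iv G i₀ z) = t := by
    intro i₀ z hz
    refine AtomPf.prop_step hmono hrad t hkey (AtomPf.sel_mem i₀) a b z i₀
      ⟨AtomPf.Blk i₀, Set.mem_range_self i₀⟩ (AtomPf.sel_self i₀) ?_ httop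
      (hdiv _ (AtomPf.sel_mem i₀) z) hz
    show μm (AtomPf.Blk i₀) ≠ 0
    rw [AtomPf.mu_Blk μm i₀]
    exact (hpos i₀).ne'
  have horb : ∀ l : List ι,
      AtomPf.theta ν t (comps (fun i => Function.invFun (G i)) l y₀) = t := by
    intro l
    induction l with
    | nil =>
        show AtomPf.theta ν t y₀ = t
        show min (ν {y₀}) t = t
        rw [← ht, min_self]
    | cons i l ih =>
        show AtomPf.theta ν t (Function.invFun (G i)
          (comps (fun j => Function.invFun (G j)) l y₀)) = t
        exact hstep i _ ih
  refine ⟨y₀, hy₀K, ?_⟩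
  have hsubset : {y | (∃ f ∈ sgen (fun i => Function.invFun (G i)), f y₀ = y) ∧
      y ∈ Icc c d} ⊆ {y | y ∈ Icc c d ∧ t ≤ ν {y}} := by
    rintro y ⟨⟨f, ⟨l, _, rfl⟩, rfl⟩, hyK⟩
    refine ⟨hyK, ?_⟩
    have h2 := horb l
    exact min_eq_right_iff.1 h2
  refine Set.Finite.subset ?_ hsubset
  by_contra hinf
  have e : ℕ ↪ ↥{y | y ∈ Icc c d ∧ t ≤ ν {y}} := Set.Infinite.natEmbedding _ hinf
  have hmeas : ν (⋃ n : ℕ, {((e n : ↥{y | y ∈ Icc c d ∧ t ≤ ν {y}}) : ℝ)})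
      = ∑' n : ℕ, ν {((e n : ↥{y | y ∈ Icc c d ∧ t ≤ ν {y}}) : ℝ)} := by
    refine measure_iUnion ?_ fun n => measurableSet_singleton _
    intro n m hnm
    simp only [Function.onFun, Set.disjoint_singleton]
    intro hval
    exact hnm (e.injective (Subtype.ext hval))
  have hbig : (⊤ : ℝ≥0∞) ≤ ν (Icc c d) := by
    calc (⊤ : ℝ≥0∞) = ∑' _ : ℕ, t := (ENNReal.tsum_const_eq_top_of_ne_zero ht0).symm
      _ ≤ ∑' n : ℕ, ν {((e n : ↥{y | y ∈ Icc c d ∧ t ≤ ν {y}}) : ℝ)} :=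
          ENNReal.tsum_le_tsum fun n => (e n).prop.2
      _ = ν (⋃ n : ℕ, {((e n : ↥{y | y ∈ Icc c d ∧ t ≤ ν {y}}) : ℝ)}) := hmeas.symm
      _ ≤ ν (Icc c d) := by
          apply measure_mono
          intro x hx
          obtain ⟨n, hn⟩ := Set.mem_iUnion.1 hx
          rw [Set.mem_singleton_iff.1 hn]
          exact (e n).prop.1
  exact (hrad _ isCompact_Icc).ne (top_le_iff.1 hbig)
end

section
/- Assume conditions (C) and (U) hold. Then any two nonempty closed Γ-invariant subsets M₁, M₂ of ℝ have nonempty intersection: M₁ ∩ M₂ ≠ ∅. -/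
open MeasureTheory Filter Set Function Topology
open scoped ENNReal NNReal

private lemma comps_strictMono' {ι : Type*} (G : ι → ℝ → ℝ) (hG : ∀ i, IsOPH (G i))
    (l : List ι) : StrictMono (comps G l) := by
  induction l with
  | nil => exact strictMono_id
  | cons i l ih =>
      show StrictMono (G i ∘ comps G l)
      exact (hG i).1.comp ih

private lemma comps_mem' {ι : Type*} (G : ι → ℝ → ℝ) {M : Set ℝ}
    (hM : ∀ i, G i '' M ⊆ M) (l : List ι) {x : ℝ} (hx : x ∈ M) :
    comps G l x ∈ M := by
  induction l with
  | nil => exact hx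
  | cons i l ih => exact hM i ⟨_, ih, rfl⟩

private lemma exists_gt_of_inv' {ι : Type*} (G : ι → ℝ → ℝ) (hU : CondU G) {M : Set ℝ}
    (hne : M.Nonempty) (hcl : IsClosed M) (hinv : ∀ i, G i '' M ⊆ M) (r : ℝ) :
    ∃ p ∈ M, r < p := by
  by_contra h
  push_neg at h
  have hbdd : BddAbove M := ⟨r, fun p hp => h p hp⟩
  have hs : sSup M ∈ M := hcl.csSup_mem hne hbdd
  obtain ⟨i, j, _, hj⟩ := hU (sSup M)
  exact absurd (le_csSup hbdd (hinv j ⟨_, hs, rfl⟩)) (not_le.2 hj)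

/-- **Lemma.** Under conditions (C) and (U), any two nonempty closed `Γ`-invariant
subsets of `ℝ` intersect. -/
theorem closed_invariant_sets_intersect
    {ι : Type*} [Countable ι]
    (G : ι → ℝ → ℝ) (hG : ∀ i, IsOPH (G i))
    (hC : CondC G) (hU : CondU G)
    (M₁ M₂ : Set ℝ)
    (hM₁ne : M₁.Nonempty) (hM₁cl : IsClosed M₁) (hM₁inv : ∀ i, G i '' M₁ ⊆ M₁)
    (hM₂ne : M₂.Nonempty) (hM₂cl : IsClosed M₂) (hM₂inv : ∀ i, G i '' M₂ ⊆ M₂) :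
    (M₁ ∩ M₂).Nonempty := by
  by_contra hcon
  have hdisj : ∀ x : ℝ, x ∈ M₁ → x ∈ M₂ → False := fun x h1 h2 => hcon ⟨x, h1, h2⟩
  obtain ⟨a, b, hab⟩ := hC
  -- the compact slices
  set A : Set ℝ := M₁ ∩ Icc a b with hA
  set B : Set ℝ := M₂ ∩ Icc a b with hB
  have hAcomp : IsCompact A := (isCompact_Icc).inter_left hM₁cl
  have hBcomp : IsCompact B := (isCompact_Icc).inter_left hM₂cl
  -- A and B are nonempty
  obtain ⟨x₁, hx₁⟩ := hM₁ne
  obtain ⟨x₂, hx₂⟩ := hM₂ne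
  have hAne : A.Nonempty := by
    obtain ⟨g, ⟨l, -, rfl⟩, hgK⟩ := hab {x₁} isCompact_singleton
    exact ⟨comps G l x₁, comps_mem' G hM₁inv l hx₁, hgK ⟨x₁, rfl, rfl⟩⟩
  have hBne : B.Nonempty := by
    obtain ⟨g, ⟨l, -, rfl⟩, hgK⟩ := hab {x₂} isCompact_singleton
    exact ⟨comps G l x₂, comps_mem' G hM₂inv l hx₂, hgK ⟨x₂, rfl, rfl⟩⟩
  -- minimum distance δ between A and B
  obtain ⟨z₀, hz₀, hzmin⟩ := (hAcomp.prod hBcomp).exists_isMinOn (hAne.prod hBne)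
    (Continuous.continuousOn (by continuity : Continuous fun z : ℝ × ℝ => |z.2 - z.1|))
  set δ : ℝ := |z₀.2 - z₀.1| with hδ
  have hδpos : 0 < δ := by
    rcases hz₀ with ⟨hz1, hz2⟩
    have : z₀.2 - z₀.1 ≠ 0 := by
      intro h0
      exact hdisj z₀.1 hz1.1 (by rw [← sub_eq_zero.mp h0]; exact hz2.1)
    exact abs_pos.mpr this
  have hδle : ∀ p q : ℝ, p ∈ A → q ∈ B → δ ≤ |q - p| := by
    intro p q hp hq
    exact hzmin (Set.mk_mem_prod hp hq)
  -- how to step forward through M₁ then M₂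
  have step : ∀ r : ℝ, ∃ pq : ℝ × ℝ, pq.1 ∈ M₁ ∧ pq.2 ∈ M₂ ∧ r < pq.1 ∧ pq.1 < pq.2 := by
    intro r
    obtain ⟨p, hp, hrp⟩ := exists_gt_of_inv' G hU ⟨x₁, hx₁⟩ hM₁cl hM₁inv r
    obtain ⟨q, hq, hpq⟩ := exists_gt_of_inv' G hU ⟨x₂, hx₂⟩ hM₂cl hM₂inv p
    exact ⟨(p, q), hp, hq, hrp, hpq⟩
  set F : ℝ → ℝ × ℝ := fun r => (step r).choose with hF
  have hFspec : ∀ r : ℝ, (F r).1 ∈ M₁ ∧ (F r).2 ∈ M₂ ∧ r < (F r).1 ∧ (F r).1 < (F r).2 :=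
    fun r => (step r).choose_spec
  set seq : ℕ → ℝ × ℝ := fun n => Nat.rec (F 0) (fun _ prev => F prev.2) n with hseq
  have hseq0 : seq 0 = F 0 := rfl
  have hseqS : ∀ k, seq (k + 1) = F (seq k).2 := fun k => rfl
  have h1 : ∀ k, (seq k).1 ∈ M₁ := by
    intro k; cases k with
    | zero => exact (hFspec 0).1
    | succ k => rw [hseqS]; exact (hFspec _).1
  have h2 : ∀ k, (seq k).2 ∈ M₂ := by
    intro k; cases k with
    | zero => exact (hFspec 0).2.1
    | succ k => rw [hseqS]; exact (hFspec _).2.1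
  have h12 : ∀ k, (seq k).1 < (seq k).2 := by
    intro k; cases k with
    | zero => exact (hFspec 0).2.2.2
    | succ k => rw [hseqS]; exact (hFspec _).2.2.2
  have h21 : ∀ k, (seq k).2 < (seq (k + 1)).1 := by
    intro k; rw [hseqS]; exact (hFspec _).2.2.1
  have mono2 : StrictMono (fun k => (seq k).2) :=
    strictMono_nat_of_lt_succ fun k => (h21 k).trans (h12 (k + 1))
  have lb1 : ∀ k, (seq 0).1 ≤ (seq k).1 := by
    intro k
    induction k with
    | zero => exact le_refl _
    | succ k ih => exact ih.trans ((h12 k).trans (h21 k)).le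
  -- choose n large
  obtain ⟨n, hn⟩ := exists_nat_gt ((b - a) / δ)
  have hban : b - a < (n : ℝ) * δ := by
    rw [div_lt_iff₀ hδpos] at hn; linarith
  -- apply (C) to the interval containing seq 0 .. seq n
  obtain ⟨g, ⟨l, -, rfl⟩, hgK⟩ := hab (Icc (seq 0).1 (seq n).2) isCompact_Icc
  set g := comps G l with hg
  have hgmono : StrictMono g := comps_strictMono' G hG l
  have hmemK : ∀ k ≤ n, (seq k).1 ∈ Icc (seq 0).1 (seq n).2 ∧
      (seq k).2 ∈ Icc (seq 0).1 (seq n).2 := by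
    intro k hk
    have h2n : (seq k).2 ≤ (seq n).2 := mono2.monotone hk
    exact ⟨⟨lb1 k, (h12 k).le.trans h2n⟩, ⟨(lb1 k).trans (h12 k).le, h2n⟩⟩
  have hu : ∀ k ≤ n, g (seq k).1 ∈ A := by
    intro k hk
    exact ⟨comps_mem' G hM₁inv l (h1 k), hgK ⟨_, (hmemK k hk).1, rfl⟩⟩
  have hv : ∀ k ≤ n, g (seq k).2 ∈ B := by
    intro k hk
    exact ⟨comps_mem' G hM₂inv l (h2 k), hgK ⟨_, (hmemK k hk).2, rfl⟩⟩
  have gap1 : ∀ k ≤ n, g (seq k).1 + δ ≤ g (seq k).2 := by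
    intro k hk
    have := hδle _ _ (hu k hk) (hv k hk)
    rw [abs_of_pos (by linarith [hgmono (h12 k)])] at this
    linarith
  have gap2 : ∀ k, k + 1 ≤ n → g (seq k).2 + δ ≤ g (seq (k + 1)).1 := by
    intro k hk
    have := hδle _ _ (hu (k + 1) hk) (hv k (by omega))
    rw [abs_of_neg (by linarith [hgmono (h21 k)])] at this
    linarith
  have key : ∀ k, k ≤ n → g (seq 0).1 + (2 * (k : ℝ) + 1) * δ ≤ g (seq k).2 := by
    intro k
    induction k with
    | zero => intro _; have := gap1 0 (Nat.zero_le n); push_cast; linarith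
    | succ k ih =>
        intro hk
        have hk' : k ≤ n := by omega
        have i1 := ih hk'
        have i2 := gap2 k hk
        have i3 := gap1 (k + 1) hk
        push_cast
        push_cast at i1
        linarith
  have hfin := key n le_rfl
  have hua : a ≤ g (seq 0).1 := (hu 0 (Nat.zero_le n)).2.1
  have hvb : g (seq n).2 ≤ b := (hv n le_rfl).2.2
  have : (n : ℝ) * δ ≤ (2 * (n : ℝ) + 1) * δ := by nlinarith [Nat.cast_nonneg (α := ℝ) n]
  linarith
end

section
/- Suppose there exists g ∈ Γ and constants A⁺, A⁻ ∈ [0,1) and B ≥ 0 such that −A⁻·x⁻ − B ≤ g(x) ≤ A⁺·x⁺ + B for all x ∈ ℝ, where x⁺ = max(x,0) and x⁻ = max(−x,0). Then condition (C) holds: there exists an interval I ⊂ ℝ such that for every compact set K ⊂ ℝ there exists h in the semigroup Γ* generated by Γ with h(K) ⊆ I. -/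
open MeasureTheory Filter Set Function Topology
open scoped ENNReal NNReal

/-- **Lemma.** If some `g ∈ Γ` satisfies a linear bound
`-A⁻ x⁻ - B ≤ g(x) ≤ A⁺ x⁺ + B` with `A⁺, A⁻ ∈ [0,1)` and `B ≥ 0`, then
condition (C) holds. -/
theorem condC_of_contracting_linear_bound
    {ι : Type*} [Countable ι]
    (G : ι → ℝ → ℝ) (hG : ∀ i, IsOPH (G i))
    (i : ι) (Ap Am B : ℝ)
    (hAp0 : 0 ≤ Ap) (hAp1 : Ap < 1) (hAm0 : 0 ≤ Am) (hAm1 : Am < 1) (hB : 0 ≤ B)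
    (hbound : ∀ x : ℝ,
      -Am * max (-x) 0 - B ≤ G i x ∧ G i x ≤ Ap * max x 0 + B) :
    CondC G := by
  classical
  set A := max Ap Am with hA
  have hA0 : 0 ≤ A := le_trans hAp0 (le_max_left _ _)
  have hA1 : A < 1 := max_lt hAp1 hAm1
  have h1A : 0 < 1 - A := by linarith
  set C := B / (1 - A) with hC
  have hC0 : 0 ≤ C := div_nonneg hB h1A.le
  have hAC : A * C + B = C := by
    rw [hC]; field_simp; ring
  have key : ∀ x, |G i x| ≤ A * |x| + B := by
    intro x
    have h := hbound x
    rw [abs_le]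
    constructor
    · have h2 : Am * max (-x) 0 ≤ A * |x| :=
        mul_le_mul (le_max_right _ _) (max_le (neg_le_abs x) (abs_nonneg x))
          (le_max_right (-x) 0) hA0
      have := h.1
      linarith
    · have h2 : Ap * max x 0 ≤ A * |x| :=
        mul_le_mul (le_max_left _ _) (max_le (le_abs_self x) (abs_nonneg x))
          (le_max_right x 0) hA0
      have := h.2
      linarith
  have iter : ∀ n x, |(G i)^[n] x| ≤ A ^ n * |x| + C := by
    intro n
    induction n with
    | zero => intro x; simpa using hC0
    | succ n ih =>
      intro x
      rw [Function.iterate_succ_apply']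
      have h1 := key ((G i)^[n] x)
      have h2 := ih x
      have hpow : (0:ℝ) ≤ A ^ n := pow_nonneg hA0 n
      calc |G i ((G i)^[n] x)| ≤ A * |(G i)^[n] x| + B := h1
        _ ≤ A * (A ^ n * |x| + C) + B := by nlinarith
        _ = A ^ (n+1) * |x| + C := by rw [mul_add, add_assoc, hAC]; ring
  have hcomps : ∀ n, comps G (List.replicate n i) = (G i)^[n] := by
    intro n
    induction n with
    | zero => rfl
    | succ n ih =>
      rw [List.replicate_succ]
      show G i ∘ comps G (List.replicate n i) = _
      rw [ih, ← Function.iterate_succ']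
  refine ⟨-(C+1), C+1, ?_⟩
  intro K hK
  obtain ⟨M, hM⟩ := hK.isBounded.subset_closedBall 0
  set M' := max M 0 with hM'
  have hM'0 : 0 ≤ M' := le_max_right _ _
  have htend : Filter.Tendsto (fun n => A ^ n * M') Filter.atTop (nhds 0) := by
    simpa using (tendsto_pow_atTop_nhds_zero_of_lt_one hA0 hA1).mul_const M'
  obtain ⟨n, hn⟩ := (htend.eventually (eventually_le_nhds (by norm_num : (0:ℝ) < 1))).exists
  refine ⟨comps G (List.replicate (n+1) i), ⟨List.replicate (n+1) i, by simp, rfl⟩, ?_⟩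
  rintro y ⟨x, hx, rfl⟩
  rw [hcomps]
  have hxM : |x| ≤ M' := by
    have := hM hx
    rw [Metric.mem_closedBall, Real.dist_eq, sub_zero] at this
    exact le_trans this (le_max_left _ _)
  have hiter := iter (n+1) x
  have hpow : (0:ℝ) ≤ A ^ n := pow_nonneg hA0 n
  have hstep : A ^ (n+1) * |x| ≤ A ^ n * M' := by
    rw [pow_succ]
    nlinarith [mul_le_mul_of_nonneg_left hxM hpow,
      mul_nonneg (mul_nonneg (by linarith : (0:ℝ) ≤ 1 - A) hpow) (abs_nonneg x)]
  have habs : |(G i)^[n+1] x| ≤ C + 1 := by linarith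
  rw [abs_le] at habs
  exact ⟨by linarith [habs.1], habs.2⟩
end

section
/- Suppose that every g ∈ Γ satisfies the linear bound −A⁻(g)·x⁻ − B(g) ≤ g(x) ≤ A⁺(g)·x⁺ + B(g) for all x ∈ ℝ, with constants A⁺(g), A⁻(g) > 0 and B(g) ≥ 0. Assume the functions g ↦ log A⁺(g), g ↦ log A⁻(g) and g ↦ log⁺ B(g) are μ-integrable and Σ_{g∈Γ} μ(g) log A⁺(g) < 0 and Σ_{g∈Γ} μ(g) log A⁻(g) < 0. Then condition (R) holds: there exists a compact interval I ⊂ ℝ such that for every x ∈ ℝ the Markov chain X_n^x visits I infinitely often almost surely. -/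
open MeasureTheory Filter Set Function Topology
open scoped ENNReal NNReal

open scoped symmDiff

set_option linter.unusedSectionVars false
set_option linter.unusedVariables false

namespace CRproof

variable {ι : Type*} [Countable ι] [MeasurableSpace ι] [MeasurableSingletonClass ι]

lemma measAll {α : Type*} [MeasurableSpace α] [Countable α] [MeasurableSingletonClass α] (s : Set α) :
    MeasurableSet s := s.to_countable.measurableSet

lemma measFun {α β : Type*} [Countable α] [MeasurableSpace α] [MeasurableSingletonClass α]
    [MeasurableSpace β] (f : α → β) : Measurable f := fun s _ => measAll _

instance instMSC (n : ℕ) : MeasurableSingletonClass (Fin n → ι) :=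
  ⟨fun d => by
    rw [← Set.univ_pi_singleton d]
    exact MeasurableSet.univ_pi fun k => measurableSet_singleton _⟩

/-- restriction to the first `n` coordinates -/
def rr (n : ℕ) : (ℕ → ι) → (Fin n → ι) := fun ω k => ω k

/-- shift by `m` -/
def θ (m : ℕ) : (ℕ → ι) → (ℕ → ι) := fun ω k => ω (m + k)

def cylSet (n : ℕ) (c : ℕ → ι) : Set (ℕ → ι) := {ω | ∀ k < n, ω k = c k}

def cyls (ι : Type*) : Set (Set (ℕ → ι)) := {s | ∃ n c, s = cylSet n c}

lemma measurable_rr (n : ℕ) : Measurable (rr (ι := ι) n) :=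
  measurable_pi_lambda _ fun k => measurable_pi_apply _

lemma measurable_θ (m : ℕ) : Measurable (θ (ι := ι) m) :=
  measurable_pi_lambda _ fun k => measurable_pi_apply _

lemma cylSet_eq (n : ℕ) (c : ℕ → ι) :
    cylSet n c = ⋂ k : Fin n, (fun ω : ℕ → ι => ω k) ⁻¹' {c k} := by
  ext ω
  simp only [cylSet, mem_setOf_eq, mem_iInter, mem_preimage, mem_singleton_iff]
  exact ⟨fun h k => h k k.isLt, fun h k hk => h ⟨k, hk⟩⟩

lemma measurableSet_cylSet (n : ℕ) (c : ℕ → ι) : MeasurableSet (cylSet n c) := by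
  rw [cylSet_eq]
  exact MeasurableSet.iInter fun k => (measurable_pi_apply _) (measurableSet_singleton _)

lemma isPiSystem_cyls : IsPiSystem (cyls ι) := by
  rintro s ⟨n, c, rfl⟩ t ⟨m, d, rfl⟩ hne
  rcases le_total n m with h | h
  · refine ⟨m, d, ?_⟩
    obtain ⟨ω, hω⟩ := hne
    have hcd : ∀ k < n, c k = d k := fun k hk => (hω.1 k hk).symm.trans (hω.2 k (hk.trans_le h))
    ext τ
    constructor
    · rintro ⟨-, h2⟩; exact h2
    · intro h2
      exact ⟨fun k hk => (h2 k (hk.trans_le h)).trans (hcd k hk).symm, h2⟩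
  · refine ⟨n, c, ?_⟩
    obtain ⟨ω, hω⟩ := hne
    have hcd : ∀ k < m, c k = d k := fun k hk => (hω.1 k (hk.trans_le h)).symm.trans (hω.2 k hk)
    ext τ
    constructor
    · rintro ⟨h1, -⟩; exact h1
    · intro h1
      exact ⟨h1, fun k hk => (h1 k (hk.trans_le h)).trans (hcd k hk)⟩

lemma singleCoord_eq_iUnion (k : ℕ) (a : ι) :
    {ω : ℕ → ι | ω k = a} = ⋃ d : Fin k → ι,
      cylSet (k + 1) (fun j => if h : j < k then d ⟨j, h⟩ else a) := by
  ext ω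
  simp only [mem_setOf_eq, mem_iUnion]
  constructor
  · intro h
    refine ⟨fun j => ω j, fun j hj => ?_⟩
    rcases lt_or_ge j k with hj' | hj'
    · simp [hj']
    · have : j = k := by omega
      simp [this, h]
  · rintro ⟨d, hd⟩
    have := hd k (by omega)
    simpa using this

lemma pi_eq_generateFrom_cyls :
    (inferInstance : MeasurableSpace (ℕ → ι)) = MeasurableSpace.generateFrom (cyls ι) := by
  apply le_antisymm
  · rw [show (inferInstance : MeasurableSpace (ℕ → ι)) = MeasurableSpace.pi from rfl,
      MeasurableSpace.pi]
    refine iSup_le fun k => ?_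
    rw [MeasurableSpace.comap_le_iff_le_map]
    intro s _
    show MeasurableSet[MeasurableSpace.generateFrom (cyls ι)] ((fun ω : ℕ → ι => ω k) ⁻¹' s)
    have hs : (fun ω : ℕ → ι => ω k) ⁻¹' s = ⋃ a : s, {ω : ℕ → ι | ω k = (a : ι)} := by
      ext ω; simp
    rw [hs]
    refine MeasurableSet.iUnion fun a => ?_
    rw [singleCoord_eq_iUnion]
    exact MeasurableSet.iUnion fun d =>
      MeasurableSpace.measurableSet_generateFrom ⟨k + 1, _, rfl⟩
  · refine MeasurableSpace.generateFrom_le fun t ht => ?_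
    rcases ht with ⟨n, c, rfl⟩
    exact measurableSet_cylSet n c

/-- Uniqueness: two finite measures agreeing on cylinders (and with equal total mass) coincide. -/
lemma ext_cyl {Q1 Q2 : Measure (ℕ → ι)} [IsFiniteMeasure Q1]
    (h : ∀ n c, Q1 (cylSet n c) = Q2 (cylSet n c)) (huniv : Q1 univ = Q2 univ) : Q1 = Q2 := by
  refine ext_of_generate_finite (cyls ι) pi_eq_generateFrom_cyls isPiSystem_cyls ?_ huniv
  rintro s ⟨n, c, rfl⟩
  exact h n c



variable (μm : Measure ι) [IsProbabilityMeasure μm] (Q : Measure (ℕ → ι))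

def PC (μm : Measure ι) (Q : Measure (ℕ → ι)) : Prop :=
  ∀ n (c : ℕ → ι), Q (cylSet n c) = ∏ k ∈ Finset.range n, μm {c k}

lemma nonempty_of_prob (μ : Measure ι) [IsProbabilityMeasure μ] : Nonempty ι := by
  by_contra h
  rw [not_nonempty_iff] at h
  have h1 : (μ univ) = 1 := measure_univ
  rw [Set.univ_eq_empty_iff.2 h, measure_empty] at h1
  exact zero_ne_one h1

lemma Q_univ (hQ : PC μm Q) : Q univ = 1 := by
  have h0 := hQ 0 (fun _ => (nonempty_of_prob μm).some)
  have : cylSet (ι := ι) 0 (fun _ => (nonempty_of_prob μm).some) = univ := by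
    ext ω; simp [cylSet]
  rw [this] at h0
  simpa using h0

lemma Q_prob (hQ : PC μm Q) : IsProbabilityMeasure Q := ⟨Q_univ μm Q hQ⟩

/-- The pushforward of `Q` under the first-`n`-coordinates map is the product measure. -/
lemma map_rr (hQ : PC μm Q) (n : ℕ) : Q.map (rr n) = Measure.pi (fun _ : Fin n => μm) := by
  have hne := nonempty_of_prob μm
  refine Measure.ext_of_singleton fun d => ?_
  rw [Measure.map_apply (measurable_rr n) (measurableSet_singleton d)]
  set c : ℕ → ι := fun k => if h : k < n then d ⟨k, h⟩ else hne.some with hc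
  have hpre : rr n ⁻¹' {d} = cylSet n c := by
    ext ω
    simp only [mem_preimage, mem_singleton_iff, cylSet, mem_setOf_eq]
    constructor
    · intro h k hk
      rw [hc]; simp only [hk, dif_pos]
      exact congrFun h ⟨k, hk⟩
    · intro h
      funext k
      have := h k k.isLt
      rw [hc] at this
      simpa [k.isLt, rr] using this
  rw [hpre, hQ, ← Set.univ_pi_singleton d, Measure.pi_pi,
    ← Fin.prod_univ_eq_prod_range (fun k => μm {c k}) n]
  refine Finset.prod_congr rfl fun k _ => ?_
  congr 1
  rw [hc]
  simp [k.isLt]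

lemma Q_marginal (hQ : PC μm Q) (N : ℕ) (S : Fin N → Set ι) :
    Q ((rr N) ⁻¹' (univ.pi S)) = ∏ k, μm (S k) := by
  rw [← Measure.map_apply (measurable_rr N) (measAll _), map_rr μm Q hQ, Measure.pi_pi]

lemma Q_single (hQ : PC μm Q) (i : ℕ) (S : Set ι) : Q {ω | ω i ∈ S} = μm S := by
  have hset : {ω : ℕ → ι | ω i ∈ S} =
      (rr (i + 1)) ⁻¹' (univ.pi fun j : Fin (i + 1) => if (j : ℕ) = i then S else univ) := by
    ext ω
    simp only [mem_setOf_eq, mem_preimage, Set.mem_pi, mem_univ, forall_true_left, rr]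
    constructor
    · intro h j
      by_cases hj : (j : ℕ) = i
      · simpa [hj] using h
      · simp [hj]
    · intro h
      have := h ⟨i, Nat.lt_succ_self i⟩
      simpa using this
  rw [hset, Q_marginal μm Q hQ]
  rw [Finset.prod_eq_single (⟨i, Nat.lt_succ_self i⟩ : Fin (i + 1))]
  · simp
  · intro j _ hj
    have : (j : ℕ) ≠ i := fun h => hj (Fin.ext h)
    simp [this]
  · simp

lemma Q_map_eval (hQ : PC μm Q) (i : ℕ) : Q.map (fun ω => ω i) = μm := by
  refine Measure.ext_of_singleton fun a => ?_
  rw [Measure.map_apply (measurable_pi_apply i) (measurableSet_singleton a)]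
  exact Q_single μm Q hQ i {a}

lemma Q_pair (hQ : PC μm Q) {i j : ℕ} (hij : i ≠ j) (S T : Set ι) :
    Q ({ω | ω i ∈ S} ∩ {ω | ω j ∈ T}) = μm S * μm T := by
  set N := max i j + 1 with hN
  have hiN : i < N := by omega
  have hjN : j < N := by omega
  set SS : Fin N → Set ι := fun k => if (k : ℕ) = i then S else if (k : ℕ) = j then T else univ
    with hSS
  have hset : {ω : ℕ → ι | ω i ∈ S} ∩ {ω | ω j ∈ T} = (rr N) ⁻¹' (univ.pi SS) := by
    ext ω
    simp only [mem_inter_iff, mem_setOf_eq, mem_preimage, Set.mem_pi, mem_univ, forall_true_left, rr]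
    constructor
    · rintro ⟨h1, h2⟩ k
      rw [hSS]
      by_cases hk1 : (k : ℕ) = i
      · simpa [hk1] using h1
      · by_cases hk2 : (k : ℕ) = j
        · simpa [hk1, hk2, Ne.symm hij] using h2
        · simp [hk1, hk2]
    · intro h
      have h1 := h ⟨i, hiN⟩
      have h2 := h ⟨j, hjN⟩
      rw [hSS] at h1 h2
      simp only [Fin.val_mk] at h1 h2
      rw [if_pos trivial] at h1
      rw [if_neg (fun hh : j = i => hij hh.symm), if_pos trivial] at h2
      exact ⟨h1, h2⟩
  rw [hset, Q_marginal μm Q hQ]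
  have hsub : ({⟨i, hiN⟩, ⟨j, hjN⟩} : Finset (Fin N)) ⊆ Finset.univ := Finset.subset_univ _
  have hne : (⟨i, hiN⟩ : Fin N) ≠ ⟨j, hjN⟩ := fun h => hij (by injection h)
  rw [← Finset.prod_subset hsub (fun k _ hk => ?_), Finset.prod_pair hne]
  · rw [hSS]
    simp [hij, hij.symm]
  · rw [hSS]
    simp only [Finset.mem_insert, Finset.mem_singleton, not_or] at hk
    have hk1 : (k : ℕ) ≠ i := fun h => hk.1 (Fin.ext h)
    have hk2 : (k : ℕ) ≠ j := fun h => hk.2 (Fin.ext h)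
    simp [hk1, hk2]


lemma Q_map_theta (hQ : PC μm Q) (m : ℕ) : Q.map (θ m) = Q := by
  haveI := Q_prob μm Q hQ
  haveI : IsFiniteMeasure (Q.map (θ m)) := by
    constructor
    rw [Measure.map_apply (measurable_θ m) MeasurableSet.univ]
    exact measure_lt_top Q _
  refine ext_cyl (fun n c => ?_) ?_
  · rw [Measure.map_apply (measurable_θ m) (measurableSet_cylSet n c)]
    set g : ℕ → ℝ≥0∞ := fun x => if m ≤ x then μm {c (x - m)} else 1 with hg
    have hpre : θ m ⁻¹' cylSet n c =
        (rr (m + n)) ⁻¹' (univ.pi fun j : Fin (m + n) =>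
          if m ≤ (j : ℕ) then {c ((j : ℕ) - m)} else univ) := by
      ext ω
      simp only [mem_preimage, cylSet, mem_setOf_eq, Set.mem_pi, mem_univ, forall_true_left, rr, θ]
      constructor
      · intro h j
        by_cases hj : m ≤ (j : ℕ)
        · rw [if_pos hj]
          have hlt : (j : ℕ) - m < n := by omega
          have := h ((j : ℕ) - m) hlt
          rw [show m + ((j : ℕ) - m) = (j : ℕ) by omega] at this
          simpa using this
        · rw [if_neg hj]; trivial
      · intro h k hk
        have := h ⟨m + k, by omega⟩
        rw [if_pos (by simp)] at this
        simpa using this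
    rw [hpre, Q_marginal μm Q hQ, hQ n c]
    have hcongr : ∀ j : Fin (m + n),
        μm (if m ≤ (j : ℕ) then {c ((j : ℕ) - m)} else univ) = g (j : ℕ) := by
      intro j
      by_cases hj : m ≤ (j : ℕ) <;> simp [hg, hj]
    rw [Finset.prod_congr rfl (fun j _ => hcongr j),
      Fin.prod_univ_eq_prod_range (fun x => g x) (m + n), Finset.prod_range_add]
    have h1 : ∀ x ∈ Finset.range m, g x = 1 := by
      intro x hx
      simp only [Finset.mem_range] at hx
      simp only [hg]
      rw [if_neg (by omega)]
    rw [Finset.prod_congr rfl h1, Finset.prod_const_one, one_mul]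
    refine Finset.prod_congr rfl fun x _ => ?_
    rw [hg]
    simp
  · rw [Measure.map_apply (measurable_θ m) MeasurableSet.univ]
    simp

lemma Q_indep_cyl (hQ : PC μm Q) (m : ℕ) (S : Set (Fin m → ι)) (n : ℕ) (c : ℕ → ι) :
    Q ((rr m) ⁻¹' S ∩ (θ m) ⁻¹' cylSet n c) = Q ((rr m) ⁻¹' S) * Q (cylSet n c) := by
  haveI := Q_prob μm Q hQ
  have hne := nonempty_of_prob μm
  have hTm : MeasurableSet ((θ m : (ℕ → ι) → ℕ → ι) ⁻¹' cylSet n c) :=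
    measurable_θ m (measurableSet_cylSet n c)
  have key : ((Q.restrict ((θ m) ⁻¹' cylSet n c)).map (rr m) : Measure (Fin m → ι))
      = Q (cylSet n c) • (Measure.pi fun _ : Fin m => μm) := by
    refine Measure.ext_of_singleton fun d => ?_
    rw [Measure.map_apply (measurable_rr m) (measurableSet_singleton d),
      Measure.restrict_apply (measurable_rr m (measurableSet_singleton d))]
    set e : ℕ → ι := fun k => if h : k < m then d ⟨k, h⟩ else c (k - m) with he
    have hset : (rr m) ⁻¹' {d} ∩ (θ m) ⁻¹' cylSet n c = cylSet (m + n) e := by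
      ext ω
      simp only [mem_inter_iff, mem_preimage, mem_singleton_iff, cylSet, mem_setOf_eq, rr, θ]
      constructor
      · rintro ⟨h1, h2⟩ k hk
        by_cases hkm : k < m
        · have := congrFun h1 ⟨k, hkm⟩
          simpa [he, hkm, rr] using this
        · have hh := h2 (k - m) (by omega)
          rw [show m + (k - m) = k by omega] at hh
          simpa [he, hkm] using hh
      · intro h
        constructor
        · funext k
          have := h k (by omega)
          simpa [rr, he, k.isLt] using this
        · intro k hk
          have := h (m + k) (by omega)
          simpa [he, show ¬ (m + k < m) by omega, Nat.add_sub_cancel_left] using this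
    rw [hset, hQ, Finset.prod_range_add]
    have h2 : (Q (cylSet n c) • (Measure.pi fun _ : Fin m => μm)) {d}
        = (∏ k : Fin m, μm {d k}) * Q (cylSet n c) := by
      rw [Measure.smul_apply, ← Set.univ_pi_singleton d, Measure.pi_pi, smul_eq_mul, mul_comm]
    rw [h2, hQ n c]
    congr 1
    · rw [← Fin.prod_univ_eq_prod_range (fun k => μm {e k}) m]
      refine Finset.prod_congr rfl fun k _ => ?_
      congr 1
      simp [he, k.isLt]
    · refine Finset.prod_congr rfl fun k _ => ?_
      congr 1
      simp [he, show ¬ (m + k < m) by omega, Nat.add_sub_cancel_left]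
  have e1 : ((Q.restrict ((θ m) ⁻¹' cylSet n c)).map (rr m)) S
      = Q ((rr m) ⁻¹' S ∩ (θ m) ⁻¹' cylSet n c) := by
    rw [Measure.map_apply (measurable_rr m) (measAll S),
      Measure.restrict_apply (measurable_rr m (measAll S))]
  have e2 : (Q (cylSet n c) • (Measure.pi fun _ : Fin m => μm)) S
      = Q ((rr m) ⁻¹' S) * Q (cylSet n c) := by
    rw [Measure.smul_apply, smul_eq_mul, mul_comm]
    congr 1
    rw [← Measure.map_apply (measurable_rr m) (measAll S), map_rr μm Q hQ]
  rw [← e1, key, e2]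

lemma Q_indep (hQ : PC μm Q) (m : ℕ) (S : Set (Fin m → ι)) {T : Set (ℕ → ι)}
    (hT : MeasurableSet T) :
    Q ((rr m) ⁻¹' S ∩ (θ m) ⁻¹' T) = Q ((rr m) ⁻¹' S) * Q T := by
  haveI := Q_prob μm Q hQ
  set κ1 : Measure (ℕ → ι) := (Q.restrict ((rr m) ⁻¹' S)).map (θ m) with hκ1
  haveI : IsFiniteMeasure κ1 := by
    constructor
    rw [hκ1, Measure.map_apply (measurable_θ m) MeasurableSet.univ]
    simp only [preimage_univ, Measure.restrict_apply_univ]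
    exact measure_lt_top Q _
  have key : κ1 = Q ((rr m) ⁻¹' S) • Q := by
    refine ext_cyl (fun n c => ?_) ?_
    · rw [hκ1, Measure.map_apply (measurable_θ m) (measurableSet_cylSet n c),
        Measure.restrict_apply (measurable_θ m (measurableSet_cylSet n c)),
        inter_comm, Q_indep_cyl μm Q hQ, Measure.smul_apply, smul_eq_mul]
    · rw [hκ1, Measure.map_apply (measurable_θ m) MeasurableSet.univ]
      simp only [preimage_univ, Measure.restrict_apply_univ, Measure.smul_apply, smul_eq_mul]
      rw [measure_univ, mul_one]
  have := congrArg (fun μ : Measure (ℕ → ι) => μ T) key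
  simp only [Measure.smul_apply, smul_eq_mul] at this
  rw [hκ1, Measure.map_apply (measurable_θ m) hT,
    Measure.restrict_apply (measurable_θ m hT), inter_comm] at this
  exact this




/-! ### Finite-coordinate algebra and approximation -/

def fca (ι : Type*) : Set (Set (ℕ → ι)) := {A | ∃ (m : ℕ) (S : Set (Fin m → ι)), A = (rr m) ⁻¹' S}

lemma rr_lift {m M : ℕ} (h : m ≤ M) (S : Set (Fin m → ι)) :
    (rr m) ⁻¹' S = (rr M) ⁻¹' {d : Fin M → ι | (fun k : Fin m => d (Fin.castLE h k)) ∈ S} := by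
  ext ω
  simp only [mem_preimage, mem_setOf_eq]
  constructor
  · intro hs
    convert hs using 2
    rfl
  · intro hs
    convert hs using 2
    rfl

lemma isSetAlgebra_fca : IsSetAlgebra (fca ι) := by
  constructor
  · exact ⟨0, ∅, by simp⟩
  · rintro s ⟨m, S, rfl⟩
    exact ⟨m, Sᶜ, by simp⟩
  · rintro s t ⟨m, S, rfl⟩ ⟨m', S', rfl⟩
    rw [rr_lift (le_max_left m m') S, rr_lift (le_max_right m m') S', ← preimage_union]
    exact ⟨max m m', _, rfl⟩

lemma mem_fca_measurable {A : Set (ℕ → ι)} (hA : A ∈ fca ι) : MeasurableSet A := by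
  rcases hA with ⟨m, S, rfl⟩
  exact measurable_rr m (measAll S)

lemma pi_eq_generateFrom_fca :
    (inferInstance : MeasurableSpace (ℕ → ι)) = MeasurableSpace.generateFrom (fca ι) := by
  apply le_antisymm
  · rw [pi_eq_generateFrom_cyls]
    apply MeasurableSpace.generateFrom_le
    rintro t ⟨n, c, rfl⟩
    have : cylSet n c = (rr n) ⁻¹' {d : Fin n → ι | ∀ k : Fin n, d k = c k} := by
      ext ω
      simp only [cylSet, mem_setOf_eq, mem_preimage]
      exact ⟨fun h k => h k k.isLt, fun h k hk => h ⟨k, hk⟩⟩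
    rw [this]
    exact MeasurableSpace.measurableSet_generateFrom ⟨n, _, rfl⟩
  · exact MeasurableSpace.generateFrom_le fun t ht => mem_fca_measurable ht

lemma approxQ (hQ : PC μm Q) {D : Set (ℕ → ι)} (hD : MeasurableSet D) {ε : ℝ} (hε : 0 < ε) :
    ∃ (m : ℕ) (S : Set (Fin m → ι)), Q (D ∆ ((rr m) ⁻¹' S)) < ENNReal.ofReal ε := by
  haveI := Q_prob μm Q hQ
  have hd := Measure.MeasureDense.of_generateFrom_isSetAlgebra_finite (μ := Q)
    isSetAlgebra_fca pi_eq_generateFrom_fca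
  rcases hd.approx D hD (measure_ne_top Q D) ε hε with ⟨t, ⟨m, S, rfl⟩, h⟩
  exact ⟨m, S, h⟩

/-! ### IID structure and the strong law -/

lemma iid_slln (hQ : PC μm Q) (f : ι → ℝ) (hf : Integrable f μm) :
    ∀ᵐ ω ∂Q, Tendsto (fun n : ℕ => (n : ℝ)⁻¹ * ∑ k ∈ Finset.range n, f (ω k))
      atTop (𝓝 (∫ i, f i ∂μm)) := by
  haveI := Q_prob μm Q hQ
  set X : ℕ → (ℕ → ι) → ℝ := fun k ω => f (ω k) with hX
  have hmeasf : Measurable f := measFun f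
  have hmeasX : ∀ k, Measurable (X k) := fun k => hmeasf.comp (measurable_pi_apply k)
  have hint : Integrable (X 0) Q := by
    have h0 : Integrable f (Q.map (fun ω : ℕ → ι => ω 0)) := by
      rw [Q_map_eval μm Q hQ]
      exact hf
    exact (integrable_map_measure hmeasf.aestronglyMeasurable
      (measurable_pi_apply 0).aemeasurable).mp h0
  have hindep : Pairwise ((fun f g => ProbabilityTheory.IndepFun f g Q) on X) := by
    intro i j hij
    show ProbabilityTheory.IndepFun (X i) (X j) Q
    rw [ProbabilityTheory.indepFun_iff_measure_inter_preimage_eq_mul]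
    intro s t _ _
    have h1 : X i ⁻¹' s = {ω : ℕ → ι | ω i ∈ f ⁻¹' s} := rfl
    have h2 : X j ⁻¹' t = {ω : ℕ → ι | ω j ∈ f ⁻¹' t} := rfl
    rw [h1, h2, Q_pair μm Q hQ hij, Q_single μm Q hQ, Q_single μm Q hQ]
  have hident : ∀ i, ProbabilityTheory.IdentDistrib (X i) (X 0) Q Q := by
    intro i
    refine ⟨(hmeasX i).aemeasurable, (hmeasX 0).aemeasurable, ?_⟩
    have hi : ∀ j : ℕ, Q.map (X j) = μm.map f := by
      intro j
      show Q.map (f ∘ (fun ω : ℕ → ι => ω j)) = μm.map f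
      rw [← Measure.map_map hmeasf (measurable_pi_apply j), Q_map_eval μm Q hQ]
    rw [hi i, hi 0]
  have hmean : (∫ ω, X 0 ω ∂Q) = ∫ i, f i ∂μm := by
    have h0 : (∫ x, f x ∂(Q.map (fun ω : ℕ → ι => ω 0))) = ∫ ω, X 0 ω ∂Q := by
      rw [integral_map (measurable_pi_apply 0).aemeasurable hmeasf.aestronglyMeasurable]
      try rfl
    rw [← h0, Q_map_eval μm Q hQ]
  have := ProbabilityTheory.strong_law_ae X hint hindep hident
  rw [hmean] at this
  filter_upwards [this] with ω hω
  simpa [smul_eq_mul] using hω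


/-! ### The affine recursion along lists -/

section process

variable {κ : Type*} (Ap B : κ → ℝ)

def FF : List κ → ℝ
  | [] => 0
  | i :: l => Ap i * FF l + B i

def PROD (l : List κ) : ℝ := (l.map Ap).prod

@[simp] lemma FF_nil : FF Ap B [] = 0 := rfl
@[simp] lemma FF_cons (i : κ) (l : List κ) : FF Ap B (i :: l) = Ap i * FF Ap B l + B i := rfl
@[simp] lemma PROD_nil : PROD Ap [] = 1 := rfl
@[simp] lemma PROD_cons (i : κ) (l : List κ) : PROD Ap (i :: l) = Ap i * PROD Ap l := by
  simp [PROD]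

lemma PROD_append (l1 l2 : List κ) : PROD Ap (l1 ++ l2) = PROD Ap l1 * PROD Ap l2 := by
  simp [PROD]

lemma PROD_reverse (l : List κ) : PROD Ap l.reverse = PROD Ap l := by
  rw [PROD, List.map_reverse, List.prod_reverse]
  rfl

lemma PROD_pos (hAp : ∀ i, 0 < Ap i) (l : List κ) : 0 < PROD Ap l := by
  induction l with
  | nil => simp
  | cons i l ih => simpa using mul_pos (hAp i) ih

lemma FF_nonneg (hAp : ∀ i, 0 < Ap i) (hB : ∀ i, 0 ≤ B i) (l : List κ) : 0 ≤ FF Ap B l := by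
  induction l with
  | nil => simp
  | cons i l ih => simpa using add_nonneg (mul_nonneg (hAp i).le ih) (hB i)

lemma FF_append (l1 l2 : List κ) :
    FF Ap B (l1 ++ l2) = FF Ap B l1 + PROD Ap l1 * FF Ap B l2 := by
  induction l1 with
  | nil => simp
  | cons i l ih =>
    simp only [List.cons_append, FF_cons, ih, PROD_cons]
    ring

lemma reverse_ofFn {n : ℕ} (f : Fin n → κ) :
    (List.ofFn f).reverse = List.ofFn (fun k => f (Fin.rev k)) := by
  induction n with
  | zero => simp
  | succ n ih =>
    rw [List.ofFn_succ, List.reverse_cons, ih, List.ofFn_succ' (fun k => f (Fin.rev k))]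
    rw [List.concat_eq_append]
    congr 1
    · refine congrArg _ (funext fun i => ?_)
      rw [Fin.rev_castSucc]
    · rw [Fin.rev_last]

end process

/-! ### The dominating processes -/

section dominating

variable {ι : Type*}

def LL (n : ℕ) (ω : ℕ → ι) : List ι := List.ofFn (fun k : Fin n => ω k)

variable (Ap B : ι → ℝ)

def MM (n : ℕ) (ω : ℕ → ι) : ℝ := FF Ap B (LL n ω).reverse
def ZZ (n : ℕ) (ω : ℕ → ι) : ℝ := FF Ap B (LL n ω)
def PP (n : ℕ) (ω : ℕ → ι) : ℝ := PROD Ap (LL n ω)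

def MMd {n : ℕ} (d : Fin n → ι) : ℝ := FF Ap B (List.ofFn d).reverse
def ZZd {n : ℕ} (d : Fin n → ι) : ℝ := FF Ap B (List.ofFn d)

@[simp] lemma LL_zero (ω : ℕ → ι) : LL 0 ω = [] := rfl

lemma LL_succ (n : ℕ) (ω : ℕ → ι) : LL (n + 1) ω = LL n ω ++ [ω n] := by
  rw [LL, List.ofFn_succ' (fun k : Fin (n + 1) => ω k), List.concat_eq_append]
  rfl

lemma LL_add (m j : ℕ) (ω : ℕ → ι) : LL (m + j) ω = LL m ω ++ LL j (θ m ω) := by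
  rw [LL, List.ofFn_add]
  rfl

@[simp] lemma MM_zero (ω : ℕ → ι) : MM Ap B 0 ω = 0 := rfl
@[simp] lemma ZZ_zero (ω : ℕ → ι) : ZZ Ap B 0 ω = 0 := rfl
@[simp] lemma PP_zero (ω : ℕ → ι) : PP Ap 0 ω = 1 := rfl

lemma MM_succ (n : ℕ) (ω : ℕ → ι) :
    MM Ap B (n + 1) ω = Ap (ω n) * MM Ap B n ω + B (ω n) := by
  rw [MM, LL_succ, List.reverse_append]
  simp [MM]

lemma ZZ_succ (n : ℕ) (ω : ℕ → ι) :
    ZZ Ap B (n + 1) ω = ZZ Ap B n ω + PP Ap n ω * B (ω n) := by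
  rw [ZZ, LL_succ, FF_append]
  simp [ZZ, PP, FF]

lemma PP_succ (n : ℕ) (ω : ℕ → ι) : PP Ap (n + 1) ω = PP Ap n ω * Ap (ω n) := by
  rw [PP, LL_succ, PROD_append]
  simp [PP]

lemma MM_split (m j : ℕ) (ω : ℕ → ι) :
    MM Ap B (m + j) ω = MM Ap B j (θ m ω) + PP Ap j (θ m ω) * MM Ap B m ω := by
  rw [MM, LL_add, List.reverse_append, FF_append, PROD_reverse]
  rfl

lemma MM_nonneg (hAp : ∀ i, 0 < Ap i) (hB : ∀ i, 0 ≤ B i) (n : ℕ) (ω : ℕ → ι) :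
    0 ≤ MM Ap B n ω := FF_nonneg Ap B hAp hB _

lemma ZZ_nonneg (hAp : ∀ i, 0 < Ap i) (hB : ∀ i, 0 ≤ B i) (n : ℕ) (ω : ℕ → ι) :
    0 ≤ ZZ Ap B n ω := FF_nonneg Ap B hAp hB _

lemma PP_pos (hAp : ∀ i, 0 < Ap i) (n : ℕ) (ω : ℕ → ι) : 0 < PP Ap n ω :=
  PROD_pos Ap hAp _

lemma ZZ_mono (hAp : ∀ i, 0 < Ap i) (hB : ∀ i, 0 ≤ B i) (ω : ℕ → ι) :
    Monotone fun n => ZZ Ap B n ω := by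
  refine monotone_nat_of_le_succ fun n => ?_
  rw [ZZ_succ]
  have := mul_nonneg (PP_pos Ap hAp n ω).le (hB (ω n))
  linarith

lemma PP_eq_exp (hAp : ∀ i, 0 < Ap i) (n : ℕ) (ω : ℕ → ι) :
    PP Ap n ω = Real.exp (∑ k ∈ Finset.range n, Real.log (Ap (ω k))) := by
  induction n with
  | zero => simp
  | succ n ih =>
    rw [PP_succ, ih, Finset.sum_range_succ, Real.exp_add, Real.exp_log (hAp (ω n))]

lemma MM_eq_MMd (n : ℕ) (ω : ℕ → ι) : MM Ap B n ω = MMd Ap B (rr n ω) := rfl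
lemma ZZ_eq_ZZd (n : ℕ) (ω : ℕ → ι) : ZZ Ap B n ω = ZZd Ap B (rr n ω) := rfl

lemma MMd_eq_ZZd_rev {n : ℕ} (d : Fin n → ι) : MMd Ap B d = ZZd Ap B (d ∘ Fin.rev) := by
  rw [MMd, ZZd, reverse_ofFn]
  rfl

end dominating




section chainbound

variable {ι : Type*}

lemma chain_bound {G : ι → ℝ → ℝ} {Ap Am B : ι → ℝ}
    (hAp : ∀ i, 0 < Ap i) (hAm : ∀ i, 0 < Am i) (hB : ∀ i, 0 ≤ B i)
    (hbound : ∀ i (x : ℝ), -(Am i) * max (-x) 0 - B i ≤ G i x ∧ G i x ≤ Ap i * max x 0 + B i)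
    (x : ℝ) (ω : ℕ → ι) :
    ∀ n, -(max (-x) 0 * PP Am n ω + MM Am B n ω) ≤ chain G ω x n ∧
      chain G ω x n ≤ max x 0 * PP Ap n ω + MM Ap B n ω := by
  intro n
  induction n with
  | zero =>
    constructor
    · show -(max (-x) 0 * PP Am 0 ω + MM Am B 0 ω) ≤ x
      rw [PP_zero, MM_zero]
      have : -x ≤ max (-x) 0 := le_max_left _ _
      linarith
    · show x ≤ max x 0 * PP Ap 0 ω + MM Ap B 0 ω
      rw [PP_zero, MM_zero]
      have : x ≤ max x 0 := le_max_left _ _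
      linarith
  | succ n ih =>
    have hOne : chain G ω x (n + 1) = G (ω n) (chain G ω x n) := rfl
    have hubnd := (hbound (ω n) (chain G ω x n)).2
    have hlbnd := (hbound (ω n) (chain G ω x n)).1
    have hMp := MM_nonneg Ap B hAp hB n ω
    have hMm := MM_nonneg Am B hAm hB n ω
    have hPp := PP_pos Ap hAp n ω
    have hPm := PP_pos Am hAm n ω
    have hxp : (0:ℝ) ≤ max x 0 := le_max_right _ _
    have hxm : (0:ℝ) ≤ max (-x) 0 := le_max_right _ _
    constructor
    · -- lower bound
      have h1 : max (-(chain G ω x n)) 0 ≤ max (-x) 0 * PP Am n ω + MM Am B n ω := by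
        refine max_le ?_ (by positivity)
        have := ih.1
        linarith
      have h2 : Am (ω n) * max (-(chain G ω x n)) 0 ≤
          Am (ω n) * (max (-x) 0 * PP Am n ω + MM Am B n ω) :=
        mul_le_mul_of_nonneg_left h1 (hAm (ω n)).le
      rw [hOne, PP_succ, MM_succ]
      have := hlbnd
      nlinarith [hB (ω n)]
    · -- upper bound
      have h1 : max (chain G ω x n) 0 ≤ max x 0 * PP Ap n ω + MM Ap B n ω := by
        refine max_le ih.2 (by positivity)
      have h2 : Ap (ω n) * max (chain G ω x n) 0 ≤
          Ap (ω n) * (max x 0 * PP Ap n ω + MM Ap B n ω) :=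
        mul_le_mul_of_nonneg_left h1 (hAp (ω n)).le
      rw [hOne, PP_succ, MM_succ]
      nlinarith [hB (ω n)]

end chainbound


section det

variable {ι : Type*}

lemma det_S_atBot {a : ℕ → ℝ} {Ip : ℝ} (hIp : Ip < 0)
    (h : Tendsto (fun n : ℕ => (n : ℝ)⁻¹ * a n) atTop (𝓝 Ip)) :
    Tendsto a atTop atBot := by
  have h2 : Tendsto (fun n : ℕ => (n : ℝ) * ((n : ℝ)⁻¹ * a n)) atTop atBot :=
    Tendsto.atTop_mul_neg hIp tendsto_natCast_atTop_atTop h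
  refine h2.congr' ?_
  filter_upwards [eventually_ge_atTop 1] with n hn
  have hne : (n : ℝ) ≠ 0 := by
    have : (1 : ℝ) ≤ (n : ℝ) := by exact_mod_cast hn
    linarith
  field_simp

lemma det_PP {Ap : ι → ℝ} (hAp : ∀ i, 0 < Ap i) {ω : ℕ → ι} {Ip : ℝ} (hIp : Ip < 0)
    (h : Tendsto (fun n : ℕ => (n : ℝ)⁻¹ * ∑ k ∈ Finset.range n, Real.log (Ap (ω k)))
      atTop (𝓝 Ip)) :
    Tendsto (fun n => PP Ap n ω) atTop (𝓝 0) := by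
  have hS := det_S_atBot hIp h
  have := Real.tendsto_exp_atBot.comp hS
  refine this.congr fun n => ?_
  exact (PP_eq_exp Ap hAp n ω).symm

lemma det_shift_avg {a : ℕ → ℝ} {Ib : ℝ}
    (h : Tendsto (fun n : ℕ => (n : ℝ)⁻¹ * a n) atTop (𝓝 Ib)) :
    Tendsto (fun n : ℕ => (n : ℝ)⁻¹ * a (n + 1)) atTop (𝓝 Ib) := by
  have ha : Tendsto (fun n : ℕ => ((n + 1 : ℕ) : ℝ)⁻¹ * a (n + 1)) atTop (𝓝 Ib) :=
    h.comp (tendsto_add_atTop_nat 1)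
  have hb : Tendsto (fun n : ℕ => ((n : ℝ) + 1) / (n : ℝ)) atTop (𝓝 1) := by
    have h0 : Tendsto (fun n : ℕ => 1 + 1 / (n : ℝ)) atTop (𝓝 (1 + 0)) :=
      tendsto_const_nhds.add tendsto_one_div_atTop_nhds_zero_nat
    rw [add_zero] at h0
    refine h0.congr' ?_
    filter_upwards [eventually_ge_atTop 1] with n hn
    have hne : (n : ℝ) ≠ 0 := by
      have : (1 : ℝ) ≤ (n : ℝ) := by exact_mod_cast hn
      linarith
    field_simp
  have hc := ha.mul hb
  rw [mul_one] at hc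
  refine hc.congr' ?_
  filter_upwards [eventually_ge_atTop 1] with n hn
  have hne : (n : ℝ) ≠ 0 := by
    have : (1 : ℝ) ≤ (n : ℝ) := by exact_mod_cast hn
    linarith
  have hne' : ((n : ℝ) + 1) ≠ 0 := by positivity
  push_cast
  field_simp

lemma det_ZZ_bdd {Ap B : ι → ℝ} (hAp : ∀ i, 0 < Ap i) (hB : ∀ i, 0 ≤ B i) {ω : ℕ → ι}
    {Ip Ib : ℝ} (hIp : Ip < 0)
    (hS : Tendsto (fun n : ℕ => (n : ℝ)⁻¹ * ∑ k ∈ Finset.range n, Real.log (Ap (ω k)))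
      atTop (𝓝 Ip))
    (hU : Tendsto (fun n : ℕ => (n : ℝ)⁻¹ * ∑ k ∈ Finset.range n, max (Real.log (B (ω k))) 0)
      atTop (𝓝 Ib)) :
    ∃ R : ℝ, ∀ n, ZZ Ap B n ω ≤ R := by
  set S : ℕ → ℝ := fun n => ∑ k ∈ Finset.range n, Real.log (Ap (ω k)) with hSdef
  set U : ℕ → ℝ := fun n => ∑ k ∈ Finset.range n, max (Real.log (B (ω k))) 0 with hUdef
  set W : ℕ → ℝ := fun n => S n + (U (n + 1) - U n) with hWdef
  have hW : Tendsto (fun n : ℕ => (n : ℝ)⁻¹ * W n) atTop (𝓝 Ip) := by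
    have h1 := det_shift_avg hU
    have h2 := (hS.add ((h1.sub hU)))
    rw [sub_self, add_zero] at h2
    refine h2.congr fun n => ?_
    rw [hWdef]
    ring
  have hev : ∀ᶠ n : ℕ in atTop, W n ≤ Ip / 2 * (n : ℝ) := by
    have h1 : ∀ᶠ n : ℕ in atTop, (n : ℝ)⁻¹ * W n < Ip / 2 :=
      Filter.Tendsto.eventually_lt_const (show Ip < Ip / 2 by linarith) hW
    filter_upwards [h1, eventually_ge_atTop 1] with n hn h1n
    have hpos : (0 : ℝ) < (n : ℝ) := by
      have : (1 : ℝ) ≤ (n : ℝ) := by exact_mod_cast h1n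
      linarith
    have := mul_le_mul_of_nonneg_left hn.le hpos.le
    rw [← mul_assoc, mul_inv_cancel₀ hpos.ne', one_mul] at this
    linarith [this]
  obtain ⟨N, hN⟩ := eventually_atTop.mp hev
  set r : ℝ := Real.exp (Ip / 2) with hrdef
  have hr0 : 0 < r := Real.exp_pos _
  have hr1 : r < 1 := by
    rw [hrdef, Real.exp_lt_one_iff]
    linarith
  have hinc : ∀ k, N ≤ k → PP Ap k ω * B (ω k) ≤ r ^ k := by
    intro k hk
    have h1 : PP Ap k ω = Real.exp (S k) := PP_eq_exp Ap hAp k ω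
    have hUdiff : U (k + 1) - U k = max (Real.log (B (ω k))) 0 := by
      rw [hUdef]
      simp [Finset.sum_range_succ]
    have h2 : B (ω k) ≤ Real.exp (U (k + 1) - U k) := by
      rw [hUdiff]
      rcases le_or_gt (B (ω k)) 1 with h | h
      · have h3 : Real.exp 0 ≤ Real.exp (max (Real.log (B (ω k))) 0) :=
          Real.exp_le_exp.mpr (le_max_right _ _)
        rw [Real.exp_zero] at h3
        linarith
      · calc B (ω k) = Real.exp (Real.log (B (ω k))) := (Real.exp_log (by linarith)).symm
          _ ≤ Real.exp (max (Real.log (B (ω k))) 0) := Real.exp_le_exp.mpr (le_max_left _ _)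
    calc PP Ap k ω * B (ω k) ≤ Real.exp (S k) * Real.exp (U (k + 1) - U k) := by
          rw [h1]
          exact mul_le_mul_of_nonneg_left h2 (Real.exp_pos _).le
      _ = Real.exp (W k) := by rw [← Real.exp_add, hWdef]
      _ ≤ Real.exp (Ip / 2 * k) := Real.exp_le_exp.mpr (hN k hk)
      _ = r ^ k := by rw [hrdef, ← Real.exp_nat_mul, mul_comm]
  have key : ∀ n, N ≤ n → ZZ Ap B n ω ≤ ZZ Ap B N ω + ∑ k ∈ Finset.Ico N n, r ^ k := by
    intro n hn
    induction n with
    | zero =>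
      have : N = 0 := Nat.le_zero.mp hn
      simp [this]
    | succ n ih =>
      rcases Nat.eq_or_lt_of_le hn with h | h
      · rw [← h]
        simp
      · have hn' : N ≤ n := by omega
        have h1 := ih hn'
        rw [ZZ_succ, Finset.sum_Ico_succ_top hn']
        have h2 := hinc n hn'
        linarith
  have hgeom : ∀ n, ∑ k ∈ Finset.Ico N n, r ^ k ≤ (1 - r)⁻¹ := by
    intro n
    have hsub : Finset.Ico N n ⊆ Finset.range n := by
      intro k hk
      simp only [Finset.mem_Ico] at hk
      exact Finset.mem_range.mpr hk.2
    have h1 : ∑ k ∈ Finset.Ico N n, r ^ k ≤ ∑ k ∈ Finset.range n, r ^ k :=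
      Finset.sum_le_sum_of_subset_of_nonneg hsub fun k _ _ => pow_nonneg hr0.le k
    have h2 : ∑ k ∈ Finset.range n, r ^ k ≤ ∑' k : ℕ, r ^ k :=
      (summable_geometric_of_lt_one hr0.le hr1).sum_le_tsum _ (fun k _ => pow_nonneg hr0.le k)
    rw [tsum_geometric_of_lt_one hr0.le hr1] at h2
    linarith
  refine ⟨ZZ Ap B N ω + (1 - r)⁻¹, fun n => ?_⟩
  have hinv : (0 : ℝ) ≤ (1 - r)⁻¹ := by
    have : (0:ℝ) < 1 - r := by linarith
    positivity
  rcases le_or_gt n N with h | h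
  · have := ZZ_mono Ap B hAp hB ω h
    simp only at this
    linarith
  · have h1 := key n h.le
    have h2 := hgeom n
    linarith

end det


lemma measurable_rev_comp (n : ℕ) : Measurable (fun d : Fin n → ι => d ∘ Fin.rev) :=
  measurable_pi_lambda _ fun k => measurable_pi_apply _

lemma rev_measure (hQ : PC μm Q) (n : ℕ) (A : Set (Fin n → ι)) :
    Q (rr n ⁻¹' ((fun d : Fin n → ι => d ∘ Fin.rev) ⁻¹' A)) = Q (rr n ⁻¹' A) := by
  haveI := Q_prob μm Q hQ
  have hmap : (Measure.pi fun _ : Fin n => μm).map (fun d : Fin n → ι => d ∘ Fin.rev)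
      = Measure.pi fun _ : Fin n => μm := by
    refine Measure.ext_of_singleton fun e => ?_
    rw [Measure.map_apply (measurable_rev_comp n) (measurableSet_singleton e)]
    have hpre : (fun d : Fin n → ι => d ∘ Fin.rev) ⁻¹' {e} = {e ∘ Fin.rev} := by
      ext d
      simp only [mem_preimage, mem_singleton_iff]
      constructor
      · intro h
        funext k
        have := congrFun h (Fin.rev k)
        simpa [Fin.rev_rev] using this
      · intro h
        funext k
        rw [h]
        simp [Function.comp, Fin.rev_rev]
    rw [hpre, ← Set.univ_pi_singleton e, ← Set.univ_pi_singleton (e ∘ Fin.rev),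
      Measure.pi_pi, Measure.pi_pi]
    exact Equiv.prod_comp Fin.revPerm (fun k => μm {e k})
  rw [← Measure.map_apply (measurable_rr n) (measAll _), map_rr μm Q hQ,
    ← Measure.map_apply (measurable_rr n) (measAll _), map_rr μm Q hQ,
    ← Measure.map_apply (measurable_rev_comp n) (measAll A), hmap]


theorem mainCR (hQ : PC μm Q)
    (G : ι → ℝ → ℝ) (Ap Am B : ι → ℝ)
    (hAp : ∀ i, 0 < Ap i) (hAm : ∀ i, 0 < Am i) (hB : ∀ i, 0 ≤ B i)
    (hbound : ∀ i (x : ℝ), -(Am i) * max (-x) 0 - B i ≤ G i x ∧ G i x ≤ Ap i * max x 0 + B i)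
    (hiAp : Integrable (fun i => Real.log (Ap i)) μm)
    (hiAm : Integrable (fun i => Real.log (Am i)) μm)
    (hiB : Integrable (fun i => max (Real.log (B i)) 0) μm)
    (hdriftp : ∫ i, Real.log (Ap i) ∂μm < 0)
    (hdriftm : ∫ i, Real.log (Am i) ∂μm < 0) :
    ∃ a b : ℝ, a ≤ b ∧ ∀ x : ℝ, ∀ᵐ ω ∂Q, ∃ᶠ n in atTop, chain G ω x n ∈ Icc a b := by
  classical
  haveI := Q_prob μm Q hQ
  -- strong law facts
  have hp := iid_slln μm Q hQ (fun i => Real.log (Ap i)) hiAp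
  have hm := iid_slln μm Q hQ (fun i => Real.log (Am i)) hiAm
  have hbb := iid_slln μm Q hQ (fun i => max (Real.log (B i)) 0) hiB
  -- a.e. bounded forward sums and decaying products
  have haePP : ∀ᵐ ω ∂Q, Tendsto (fun n => PP Ap n ω) atTop (𝓝 0) ∧
      Tendsto (fun n => PP Am n ω) atTop (𝓝 0) := by
    filter_upwards [hp, hm] with ω h1 h2
    exact ⟨det_PP hAp hdriftp h1, det_PP hAm hdriftm h2⟩
  have haeZZ : ∀ᵐ ω ∂Q, (∃ R : ℝ, ∀ n, ZZ Ap B n ω ≤ R) ∧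
      (∃ R : ℝ, ∀ n, ZZ Am B n ω ≤ R) := by
    filter_upwards [hp, hm, hbb] with ω h1 h2 h3
    exact ⟨det_ZZ_bdd hAp hB hdriftp h1 h3, det_ZZ_bdd hAm hB hdriftm h2 h3⟩
  -- the sets A_C
  set AA : ℕ → Set (ℕ → ι) :=
    fun C => ⋂ n, rr n ⁻¹' {d : Fin n → ι | ZZd Ap B d ≤ (C : ℝ) ∧ ZZd Am B d ≤ (C : ℝ)}
    with hAAdef
  have hAAmem : ∀ C ω, ω ∈ AA C ↔ ∀ n, ZZ Ap B n ω ≤ (C : ℝ) ∧ ZZ Am B n ω ≤ (C : ℝ) := by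
    intro C ω
    rw [hAAdef]
    simp only [mem_iInter, mem_preimage, mem_setOf_eq]
    constructor
    · intro h n
      have := h n
      rw [ZZ_eq_ZZd Ap B n ω, ZZ_eq_ZZd Am B n ω]
      exact this
    · intro h n
      have := h n
      rw [ZZ_eq_ZZd Ap B n ω, ZZ_eq_ZZd Am B n ω] at this
      exact this
  have hAAmeas : ∀ C, MeasurableSet (AA C) := fun C =>
    MeasurableSet.iInter fun n => measurable_rr n (measAll _)
  have hAAmono : Monotone AA := by
    intro C C' hCC ω hω
    rw [hAAmem] at hω ⊢
    intro n
    have h1 := hω n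
    have h2 : (C : ℝ) ≤ (C' : ℝ) := by exact_mod_cast hCC
    exact ⟨h1.1.trans h2, h1.2.trans h2⟩
  have hAAcover : ∀ᵐ ω ∂Q, ω ∈ ⋃ C, AA C := by
    filter_upwards [haeZZ] with ω hω
    obtain ⟨⟨R1, hR1⟩, ⟨R2, hR2⟩⟩ := hω
    refine mem_iUnion.mpr ⟨⌈max R1 R2⌉₊, (hAAmem _ ω).mpr fun n => ?_⟩
    have hle : max R1 R2 ≤ (⌈max R1 R2⌉₊ : ℝ) := Nat.le_ceil _
    exact ⟨(hR1 n).trans ((le_max_left _ _).trans hle),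
      (hR2 n).trans ((le_max_right _ _).trans hle)⟩
  have hQUnion : Q (⋃ C, AA C) = 1 := by
    rw [← prob_compl_eq_zero_iff (MeasurableSet.iUnion hAAmeas)]
    rw [ae_iff] at hAAcover
    convert hAAcover using 2
    rfl
  obtain ⟨C, hC⟩ : ∃ C : ℕ, (1 : ℝ≥0∞) / 2 < Q (AA C) := by
    rw [← lt_iSup_iff]
    rw [← Directed.measure_iUnion (hAAmono.directed_le), hQUnion]
    norm_num
  -- the events B_n and E_c
  set Bev : ℝ → ℕ → Set (ℕ → ι) :=
    fun c n => rr n ⁻¹' {d : Fin n → ι | MMd Ap B d ≤ c ∧ MMd Am B d ≤ c} with hBevdef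
  have hBevmem : ∀ c n ω, ω ∈ Bev c n ↔ MM Ap B n ω ≤ c ∧ MM Am B n ω ≤ c := by
    intro c n ω
    rw [hBevdef]
    simp only [mem_preimage, mem_setOf_eq]
    rw [← MM_eq_MMd Ap B n ω, ← MM_eq_MMd Am B n ω]
  have hBevmeas : ∀ c n, MeasurableSet (Bev c n) := fun c n => measurable_rr n (measAll _)
  have hrev : ∀ n, Q (AA C) ≤ Q (Bev (C : ℝ) n) := by
    intro n
    have h1 : {d : Fin n → ι | MMd Ap B d ≤ (C : ℝ) ∧ MMd Am B d ≤ (C : ℝ)} =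
        (fun d : Fin n → ι => d ∘ Fin.rev) ⁻¹'
          {d : Fin n → ι | ZZd Ap B d ≤ (C : ℝ) ∧ ZZd Am B d ≤ (C : ℝ)} := by
      ext d
      simp only [mem_setOf_eq, mem_preimage, MMd_eq_ZZd_rev]
    rw [hBevdef]
    simp only []
    rw [h1, rev_measure μm Q hQ n]
    refine measure_mono ?_
    intro ω hω
    rw [hAAmem] at hω
    have := hω n
    rw [ZZ_eq_ZZd Ap B n ω, ZZ_eq_ZZd Am B n ω] at this
    exact this
  set Gm : ℝ → ℕ → Set (ℕ → ι) := fun c m => ⋃ n, ⋃ (_ : m ≤ n), Bev c n with hGmdef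
  set Ev : ℝ → Set (ℕ → ι) := fun c => ⋂ m, Gm c m with hEvdef
  have hEvmem : ∀ c ω, ω ∈ Ev c ↔
      ∀ m, ∃ n, m ≤ n ∧ MM Ap B n ω ≤ c ∧ MM Am B n ω ≤ c := by
    intro c ω
    rw [hEvdef]
    simp only [mem_iInter, mem_iUnion, hGmdef]
    constructor
    · intro h m
      obtain ⟨n, hn, hb⟩ := h m
      exact ⟨n, hn, (hBevmem c n ω).mp hb⟩
    · intro h m
      obtain ⟨n, hn, hb⟩ := h m
      exact ⟨n, hn, (hBevmem c n ω).mpr hb⟩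
  have hGmmeas : ∀ c m, MeasurableSet (Gm c m) := fun c m =>
    MeasurableSet.iUnion fun n => MeasurableSet.iUnion fun _ => hBevmeas c n
  have hEvmeas : ∀ c, MeasurableSet (Ev c) := fun c =>
    MeasurableSet.iInter fun m => hGmmeas c m
  have hQE : (1 : ℝ≥0∞) / 2 < Q (Ev (C : ℝ)) := by
    refine lt_of_lt_of_le hC ?_
    have htend : Tendsto (fun m => Q (Gm (C : ℝ) m)) atTop (𝓝 (Q (⋂ m, Gm (C : ℝ) m))) := by
      refine tendsto_measure_iInter_atTop (fun m => (hGmmeas _ m).nullMeasurableSet) ?_ ⟨0, measure_ne_top _ _⟩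
      intro m m' hmm ω hω
      simp only [hGmdef, mem_iUnion] at hω ⊢
      obtain ⟨n, hn, hb⟩ := hω
      exact ⟨n, hmm.trans hn, hb⟩
    have hEv_eq : Ev (C : ℝ) = ⋂ m, Gm (C : ℝ) m := rfl
    rw [hEv_eq]
    refine ge_of_tendsto' htend fun m => ?_
    refine (hrev m).trans (measure_mono ?_)
    intro ω hω
    simp only [hGmdef, mem_iUnion]
    exact ⟨m, le_refl m, hω⟩
  -- shift comparisons
  have hsub1 : ∀ m, Ev (C : ℝ) ⊆ θ m ⁻¹' Ev (C : ℝ) := by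
    intro m ω hω
    rw [hEvmem] at hω
    rw [mem_preimage, hEvmem]
    intro m'
    obtain ⟨n, hn, hM1, hM2⟩ := hω (m + m')
    refine ⟨n - m, by omega, ?_, ?_⟩
    · have hsplit := MM_split Ap B m (n - m) ω
      rw [show m + (n - m) = n by omega] at hsplit
      have hPa := mul_nonneg (PP_pos Ap hAp (n - m) (θ m ω)).le (MM_nonneg Ap B hAp hB m ω)
      linarith
    · have hsplit := MM_split Am B m (n - m) ω
      rw [show m + (n - m) = n by omega] at hsplit
      have hPa := mul_nonneg (PP_pos Am hAm (n - m) (θ m ω)).le (MM_nonneg Am B hAm hB m ω)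
      linarith
  have hsub2 : ∀ m ω, Tendsto (fun n => PP Ap n ω) atTop (𝓝 0) →
      Tendsto (fun n => PP Am n ω) atTop (𝓝 0) →
      ω ∈ θ m ⁻¹' Ev (C : ℝ) → ω ∈ Ev ((C : ℝ) + 1) := by
    intro m ω hPp hPm hθω
    rw [mem_preimage, hEvmem] at hθω
    rw [hEvmem]
    intro m'
    have hPPsplit : ∀ (Aq : ι → ℝ) (j : ℕ), PP Aq (m + j) ω = PP Aq m ω * PP Aq j (θ m ω) := by
      intro Aq j
      rw [PP, LL_add, PROD_append]
      rfl
    have hdecay : ∀ (Aq Bq : ι → ℝ), (∀ i, 0 < Aq i) → (∀ i, 0 ≤ Bq i) →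
        Tendsto (fun n => PP Aq n ω) atTop (𝓝 0) →
        Tendsto (fun j => PP Aq j (θ m ω) * MM Aq Bq m ω) atTop (𝓝 0) := by
      intro Aq Bq hAq hBq hPq
      have h0 : Tendsto (fun j => PP Aq (m + j) ω) atTop (𝓝 0) := by
        have := hPq.comp (tendsto_add_atTop_nat m)
        refine this.congr fun j => ?_
        simp only [Function.comp_apply]
        rw [Nat.add_comm]
      have hconst : Tendsto (fun j => PP Aq (m + j) ω * (MM Aq Bq m ω / PP Aq m ω))
          atTop (𝓝 0) := by
        have := h0.mul_const (MM Aq Bq m ω / PP Aq m ω)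
        rwa [zero_mul] at this
      refine hconst.congr fun j => ?_
      rw [hPPsplit Aq j]
      have hne : PP Aq m ω ≠ 0 := (PP_pos Aq hAq m ω).ne'
      field_simp
    have hevent : ∀ᶠ j in atTop, PP Ap j (θ m ω) * MM Ap B m ω ≤ 1 ∧
        PP Am j (θ m ω) * MM Am B m ω ≤ 1 := by
      have h1 := Filter.Tendsto.eventually_lt_const (show (0:ℝ) < 1 by norm_num)
        (hdecay Ap B hAp hB hPp)
      have h2 := Filter.Tendsto.eventually_lt_const (show (0:ℝ) < 1 by norm_num)
        (hdecay Am B hAm hB hPm)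
      filter_upwards [h1, h2] with j hj1 hj2
      exact ⟨hj1.le, hj2.le⟩
    obtain ⟨j0, hj0⟩ := eventually_atTop.mp hevent
    obtain ⟨j, hj, hM1, hM2⟩ := hθω (max m' j0)
    refine ⟨m + j, by omega, ?_, ?_⟩
    · have hsplit := MM_split Ap B m j ω
      have := (hj0 j (le_trans (le_max_right _ _) hj)).1
      linarith
    · have hsplit := MM_split Am B m j ω
      have := (hj0 j (le_trans (le_max_right _ _) hj)).2
      linarith
  -- the key independence estimate
  have hbad : Q {ω : ℕ → ι | ¬ (Tendsto (fun n => PP Ap n ω) atTop (𝓝 0) ∧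
      Tendsto (fun n => PP Am n ω) atTop (𝓝 0))} = 0 := by
    rw [← ae_iff] at *
    exact haePP
  have hkey : ∀ m (S : Set (Fin m → ι)),
      Q (rr m ⁻¹' S) * Q (Ev (C : ℝ)) ≤ Q ((rr m ⁻¹' S) ∩ Ev ((C : ℝ) + 1)) := by
    intro m S
    rw [← Q_indep μm Q hQ m S (hEvmeas (C : ℝ))]
    have hsubset : (rr m ⁻¹' S ∩ θ m ⁻¹' Ev (C : ℝ)) ⊆
        ((rr m ⁻¹' S) ∩ Ev ((C : ℝ) + 1)) ∪
          {ω : ℕ → ι | ¬ (Tendsto (fun n => PP Ap n ω) atTop (𝓝 0) ∧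
            Tendsto (fun n => PP Am n ω) atTop (𝓝 0))} := by
      rintro ω ⟨h1, h2⟩
      by_cases hg : Tendsto (fun n => PP Ap n ω) atTop (𝓝 0) ∧
          Tendsto (fun n => PP Am n ω) atTop (𝓝 0)
      · exact Or.inl ⟨h1, hsub2 m ω hg.1 hg.2 h2⟩
      · exact Or.inr hg
    calc Q (rr m ⁻¹' S ∩ θ m ⁻¹' Ev (C : ℝ))
        ≤ Q (((rr m ⁻¹' S) ∩ Ev ((C : ℝ) + 1)) ∪ _) := measure_mono hsubset
      _ ≤ Q ((rr m ⁻¹' S) ∩ Ev ((C : ℝ) + 1)) + _ := measure_union_le _ _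
      _ = Q ((rr m ⁻¹' S) ∩ Ev ((C : ℝ) + 1)) := by rw [hbad, add_zero]
  -- zero-one upgrade via approximation
  have hD0 : Q (Ev ((C : ℝ) + 1))ᶜ = 0 := by
    set D := (Ev ((C : ℝ) + 1))ᶜ with hDdef
    have hDmeas : MeasurableSet D := (hEvmeas _).compl
    have hfinal : ∀ ε : ℝ, 0 < ε → Q D ≤ 3 * ENNReal.ofReal ε := by
      intro ε hε
      obtain ⟨m, S, hApprox⟩ := approxQ μm Q hQ hDmeas hε
      set Bset := rr m ⁻¹' S with hBsetdef
      have h1 : Q (Bset ∩ Ev ((C : ℝ) + 1)) ≤ ENNReal.ofReal ε := by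
        refine le_trans (measure_mono ?_) hApprox.le
        rintro ω ⟨hω1, hω2⟩
        exact Set.mem_symmDiff.mpr (Or.inr ⟨hω1, fun hD => hD hω2⟩)
      have h2 : Q D ≤ Q Bset + ENNReal.ofReal ε := by
        have hss : D ⊆ Bset ∪ (D ∆ Bset) := by
          intro ω hω
          by_cases h : ω ∈ Bset
          · exact Or.inl h
          · exact Or.inr (Set.mem_symmDiff.mpr (Or.inl ⟨hω, h⟩))
        calc Q D ≤ Q (Bset ∪ (D ∆ Bset)) := measure_mono hss
          _ ≤ Q Bset + Q (D ∆ Bset) := measure_union_le _ _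
          _ ≤ Q Bset + ENNReal.ofReal ε := add_le_add_right hApprox.le _
      have h3 : Q Bset ≤ 2 * ENNReal.ofReal ε := by
        have hhalf : Q Bset * ((1 : ℝ≥0∞) / 2) ≤ Q Bset * Q (Ev (C : ℝ)) :=
          mul_le_mul_right hQE.le _
        have h4 : Q Bset * ((1 : ℝ≥0∞) / 2) ≤ ENNReal.ofReal ε :=
          le_trans hhalf (le_trans (hkey m S) h1)
        have h5 : Q Bset = Q Bset * ((1 : ℝ≥0∞) / 2) * 2 := by
          rw [mul_assoc]
          rw [show (1 : ℝ≥0∞) / 2 * 2 = 1 by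
            rw [ENNReal.div_mul_cancel (by norm_num) (by norm_num)]]
          rw [mul_one]
        rw [h5]
        calc Q Bset * ((1 : ℝ≥0∞) / 2) * 2 ≤ ENNReal.ofReal ε * 2 :=
            mul_le_mul_left h4 2
          _ = 2 * ENNReal.ofReal ε := mul_comm _ _
      calc Q D ≤ Q Bset + ENNReal.ofReal ε := h2
        _ ≤ 2 * ENNReal.ofReal ε + ENNReal.ofReal ε := add_le_add_left h3 _
        _ = 3 * ENNReal.ofReal ε := by ring
    by_contra h
    have hne : Q D ≠ ⊤ := measure_ne_top _ _
    have hpos : 0 < (Q D).toReal := ENNReal.toReal_pos h hne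
    set ε := (Q D).toReal / 4 with hεdef
    have hε : 0 < ε := by positivity
    have hfin := hfinal ε hε
    have h2 : (3 : ℝ≥0∞) * ENNReal.ofReal ε = ENNReal.ofReal (3 * ε) := by
      rw [ENNReal.ofReal_mul (by norm_num : (0:ℝ) ≤ 3)]
      norm_num
    rw [h2] at hfin
    have h3 : ENNReal.ofReal (3 * ε) < Q D := by
      have h4 : 3 * ε < (Q D).toReal := by
        rw [hεdef]
        linarith
      calc ENNReal.ofReal (3 * ε) < ENNReal.ofReal ((Q D).toReal) :=
          (ENNReal.ofReal_lt_ofReal_iff hpos).mpr h4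
        _ = Q D := ENNReal.ofReal_toReal hne
    exact absurd hfin (not_le.mpr h3)
  have hE'ae : ∀ᵐ ω ∂Q, ω ∈ Ev ((C : ℝ) + 1) := by
    rw [ae_iff]
    convert hD0 using 2
    rfl
  -- conclusion
  refine ⟨-((C : ℝ) + 2), (C : ℝ) + 2, by have : (0:ℝ) ≤ (C:ℝ) := Nat.cast_nonneg C; linarith, fun x => ?_⟩
  filter_upwards [hE'ae, haePP] with ω hωE hg
  rw [frequently_atTop]
  intro m
  have ht1 : Tendsto (fun n => max x 0 * PP Ap n ω) atTop (𝓝 0) := by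
    have := hg.1.const_mul (max x 0)
    rwa [mul_zero] at this
  have ht2 : Tendsto (fun n => max (-x) 0 * PP Am n ω) atTop (𝓝 0) := by
    have := hg.2.const_mul (max (-x) 0)
    rwa [mul_zero] at this
  have hev' : ∀ᶠ n in atTop, max x 0 * PP Ap n ω ≤ 1 ∧ max (-x) 0 * PP Am n ω ≤ 1 := by
    have h1 := Filter.Tendsto.eventually_lt_const (show (0:ℝ) < 1 by norm_num) ht1
    have h2 := Filter.Tendsto.eventually_lt_const (show (0:ℝ) < 1 by norm_num) ht2
    filter_upwards [h1, h2] with n hn1 hn2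
    exact ⟨hn1.le, hn2.le⟩
  obtain ⟨n0, hn0⟩ := eventually_atTop.mp hev'
  obtain ⟨n, hn, hM1, hM2⟩ := (hEvmem _ ω).mp hωE (max m n0)
  refine ⟨n, le_trans (le_max_left _ _) hn, ?_⟩
  have hcb := chain_bound hAp hAm hB hbound x ω n
  have hn0n := hn0 n (le_trans (le_max_right _ _) hn)
  rw [Set.mem_Icc]
  constructor
  · have := hcb.1
    linarith [hn0n.2]
  · have := hcb.2
    linarith [hn0n.1]

end CRproof


/-- **Lemma.** If every `g ∈ Γ` satisfies a linear bound
`-A⁻(g) x⁻ - B(g) ≤ g(x) ≤ A⁺(g) x⁺ + B(g)` with `A⁺(g), A⁻(g) > 0`, `B(g) ≥ 0`,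
the functions `log A⁺`, `log A⁻` and `log⁺ B` are `μ`-integrable, and both drifts
`Σ_g μ(g) log A⁺(g)` and `Σ_g μ(g) log A⁻(g)` are negative, then condition (R)
holds. -/
theorem condR_of_negative_drift
    {ι : Type*} [Countable ι] [MeasurableSpace ι] [MeasurableSingletonClass ι]
    (G : ι → ℝ → ℝ) (hG : ∀ i, IsOPH (G i))
    (μm : Measure ι) [IsProbabilityMeasure μm] (hpos : ∀ i, 0 < μm {i})
    (Q : Measure (ℕ → ι)) (hQ : IsProd μm Q)
    (Ap Am B : ι → ℝ)
    (hAp : ∀ i, 0 < Ap i) (hAm : ∀ i, 0 < Am i) (hB : ∀ i, 0 ≤ B i)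
    (hbound : ∀ i, ∀ x : ℝ,
      -(Am i) * max (-x) 0 - B i ≤ G i x ∧ G i x ≤ Ap i * max x 0 + B i)
    (hiAp : Integrable (fun i => Real.log (Ap i)) μm)
    (hiAm : Integrable (fun i => Real.log (Am i)) μm)
    (hiB : Integrable (fun i => max (Real.log (B i)) 0) μm)
    (hdriftp : ∫ i, Real.log (Ap i) ∂μm < 0)
    (hdriftm : ∫ i, Real.log (Am i) ∂μm < 0) :
    CondR G Q := by
  exact CRproof.mainCR μm Q (fun n c => hQ n c) G Ap Am B hAp hAm hB hbound
    hiAp hiAm hiB hdriftp hdriftm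
end

section
/- Let r: (0,1) → ℝ be the increasing diffeomorphism r(u) = −1/u + 1/(1−u), and let h be an increasing C² diffeomorphism of [0,1] (so h(0) = 0, h(1) = 1, h' > 0 on [0,1]). Define h_r = r∘h∘r⁻¹, an orientation-preserving homeomorphism of ℝ. Then limsup_{x→+∞} h_r(x)/x = 1/h'(1), limsup_{x→−∞} h_r(x)/x = 1/h'(0), limsup_{x→+∞} [h_r(x) − x/h'(1)] < ∞, and liminf_{x→−∞} [h_r(x) − x/h'(0)] > −∞. In particular h_r satisfies the linear bound −A⁻·x⁻ − B ≤ h_r(x) ≤ A⁺·x⁺ + B for all x ∈ ℝ, for some B ≥ 0 and with A⁺ = 1/h'(1), A⁻ = 1/h'(0). -/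
open Filter Set Function Topology

/-- The diffeomorphism `r : (0,1) → ℝ`, `r(u) = -1/u + 1/(1-u)`. -/
noncomputable def rHomeo (u : ℝ) : ℝ := -1 / u + 1 / (1 - u)

/- **Lemma.** For any increasing `C²` diffeomorphism `h` of `[0,1]`, the conjugated
homeomorphism `h_r = r ∘ h ∘ r⁻¹` of `ℝ` satisfies
`limsup_{x→+∞} h_r(x)/x = 1/h'(1)`, `limsup_{x→-∞} h_r(x)/x = 1/h'(0)`,
`limsup_{x→+∞} [h_r(x) - x/h'(1)] < ∞`, `liminf_{x→-∞} [h_r(x) - x/h'(0)] > -∞`;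
in particular `h_r` satisfies the linear bound
-/
set_option maxHeartbeats 1000000 in
/-- conjugated diffeo is asymptotically linear -/
theorem conjugated_diffeo_asymptotically_linear
    (h : ℝ → ℝ)
    (hC2 : ContDiffOn ℝ 2 h (Icc 0 1))
    (h0 : h 0 = 0) (h1 : h 1 = 1)
    (hmono : StrictMonoOn h (Icc 0 1))
    (hsurj : SurjOn h (Icc 0 1) (Icc 0 1))
    (hderiv : ∀ u ∈ Icc (0:ℝ) 1, 0 < derivWithin h (Icc 0 1) u)
    -- `rinv : ℝ → (0,1)` is the inverse of `r`
    (rinv : ℝ → ℝ)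
    (hrinv_mem : ∀ x : ℝ, rinv x ∈ Ioo (0:ℝ) 1)
    (hrinv_right : ∀ x : ℝ, rHomeo (rinv x) = x)
    (hrinv_left : ∀ u ∈ Ioo (0:ℝ) 1, rinv (rHomeo u) = u) :
    Filter.limsup (fun x : ℝ => rHomeo (h (rinv x)) / x) atTop
        = 1 / derivWithin h (Icc 0 1) 1 ∧
    Filter.limsup (fun x : ℝ => rHomeo (h (rinv x)) / x) atBot
        = 1 / derivWithin h (Icc 0 1) 0 ∧
    Filter.IsBoundedUnder (· ≤ ·) atTop
        (fun x : ℝ => rHomeo (h (rinv x)) - x / derivWithin h (Icc 0 1) 1) ∧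
    Filter.IsBoundedUnder (· ≥ ·) atBot
        (fun x : ℝ => rHomeo (h (rinv x)) - x / derivWithin h (Icc 0 1) 0) ∧
    ∃ B : ℝ, 0 ≤ B ∧ ∀ x : ℝ,
      -(1 / derivWithin h (Icc 0 1) 0) * max (-x) 0 - B ≤ rHomeo (h (rinv x)) ∧
      rHomeo (h (rinv x)) ≤ (1 / derivWithin h (Icc 0 1) 1) * max x 0 + B := by
  have hUD : UniqueDiffOn ℝ (Icc (0:ℝ) 1) := uniqueDiffOn_Icc one_pos
  set h' : ℝ → ℝ := derivWithin h (Icc 0 1) with hh'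
  have ha : 0 < h' 1 := hderiv 1 (by norm_num)
  have hbpos : 0 < h' 0 := hderiv 0 (by norm_num)
  have hC1 : ContDiffOn ℝ 1 h' (Icc 0 1) := hC2.derivWithin hUD (by norm_num)
  have hcont' : ContinuousOn h' (Icc 0 1) := hC1.continuousOn
  -- lower bound m on h'
  obtain ⟨u₀, hu₀, hmin⟩ := isCompact_Icc.exists_isMinOn (nonempty_Icc.mpr zero_le_one) hcont'
  set m := h' u₀ with hmdef
  have hm : 0 < m := hderiv u₀ hu₀
  have hmle : ∀ u ∈ Icc (0:ℝ) 1, m ≤ h' u := fun u hu => hmin hu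
  -- Lipschitz constant K for h'
  obtain ⟨K, hK⟩ := isCompact_Icc.exists_bound_of_continuousOn
    (hC1.derivWithin (m := 0) hUD (by norm_num)).continuousOn
  have hK0 : 0 ≤ K := le_trans (norm_nonneg _) (hK 0 (by norm_num))
  have hlip : ∀ u ∈ Icc (0:ℝ) 1, ∀ w ∈ Icc (0:ℝ) 1, |h' u - h' w| ≤ K * |u - w| := by
    intro u hu w hw
    have := Convex.norm_image_sub_le_of_norm_derivWithin_le
      (hC1.differentiableOn one_ne_zero) hK (convex_Icc 0 1) hw hu
    simpa [Real.norm_eq_abs] using this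
  have hdiffOn : DifferentiableOn ℝ h (Icc 0 1) := hC2.differentiableOn (by norm_num)
  have hdiff : ∀ x ∈ Ioo (0:ℝ) 1, HasDerivAt h (h' x) x := by
    intro x hx
    have hnh : Icc (0:ℝ) 1 ∈ 𝓝 x := Icc_mem_nhds hx.1 hx.2
    have hd : DifferentiableAt ℝ h x := (hdiffOn x (Ioo_subset_Icc_self hx)).differentiableAt hnh
    rw [hh', derivWithin_of_mem_nhds hnh]
    exact hd.hasDerivAt
  -- key Taylor-type estimates
  have key : ∀ v ∈ Ioo (0:ℝ) 1,
      m * v ≤ h v ∧ m * (1 - v) ≤ 1 - h v ∧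
      |h v - h' 0 * v| ≤ K * v ^ 2 ∧ |1 - h v - h' 1 * (1 - v)| ≤ K * (1 - v) ^ 2 := by
    intro v hv
    obtain ⟨hv0, hv1⟩ := hv
    -- MVT on [0,v]
    obtain ⟨η, hη, hsl0⟩ := exists_hasDerivAt_eq_slope h h' hv0
      (hC2.continuousOn.mono (Icc_subset_Icc le_rfl hv1.le))
      (fun x hx => hdiff x ⟨hx.1, hx.2.trans hv1⟩)
    have hηI : η ∈ Icc (0:ℝ) 1 := ⟨hη.1.le, (hη.2.trans hv1).le⟩
    have heq0 : h v = h' η * v := by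
      rw [h0] at hsl0
      field_simp at hsl0
      linarith [hsl0]
    -- MVT on [v,1]
    obtain ⟨ξ, hξ, hsl1⟩ := exists_hasDerivAt_eq_slope h h' hv1
      (hC2.continuousOn.mono (Icc_subset_Icc hv0.le le_rfl))
      (fun x hx => hdiff x ⟨hv0.trans hx.1, hx.2⟩)
    have hξI : ξ ∈ Icc (0:ℝ) 1 := ⟨(hv0.trans hξ.1).le, hξ.2.le⟩
    have heq1 : 1 - h v = h' ξ * (1 - v) := by
      rw [h1] at hsl1
      have h1v : (1:ℝ) - v ≠ 0 := by linarith
      field_simp at hsl1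
      linarith [hsl1]
    refine ⟨?_, ?_, ?_, ?_⟩
    · rw [heq0]
      exact mul_le_mul_of_nonneg_right (hmle η hηI) hv0.le
    · rw [heq1]
      exact mul_le_mul_of_nonneg_right (hmle ξ hξI) (by linarith)
    · have : h v - h' 0 * v = (h' η - h' 0) * v := by rw [heq0]; ring
      rw [this, abs_mul, abs_of_pos hv0]
      have h1 := hlip η hηI 0 (by norm_num)
      have : |h' η - h' 0| ≤ K * v := by
        rw [sub_zero, abs_of_pos hη.1] at h1
        exact h1.trans (mul_le_mul_of_nonneg_left hη.2.le hK0)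
      have := mul_le_mul_of_nonneg_right this hv0.le
      nlinarith [this]
    · have : 1 - h v - h' 1 * (1 - v) = (h' ξ - h' 1) * (1 - v) := by rw [heq1]; ring
      rw [this, abs_mul, abs_of_pos (by linarith : (0:ℝ) < 1 - v)]
      have h1 := hlip ξ hξI 1 (by norm_num)
      have : |h' ξ - h' 1| ≤ K * (1 - v) := by
        rw [abs_of_nonpos (by linarith [hξ.2] : ξ - 1 ≤ 0)] at h1
        exact h1.trans (mul_le_mul_of_nonneg_left (by linarith [hξ.1]) hK0)
      have := mul_le_mul_of_nonneg_right this (by linarith : (0:ℝ) ≤ 1 - v)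
      nlinarith [this]
  -- the constant C
  set A := h' 1 with hAdef
  set Bv := h' 0 with hBdef
  set C : ℝ := 2/m + 2/A + 2/Bv + K/(m*A) + K/(m*Bv) with hCdef
  have hCpos : 0 ≤ C := by positivity
  -- main pointwise bounds
  have boundA : ∀ v ∈ Ioo (0:ℝ) 1, 1/2 ≤ v →
      |rHomeo (h v) - rHomeo v / A| ≤ C := by
    intro v hv hv2
    obtain ⟨k1, k2, _, k4⟩ := key v hv
    obtain ⟨hv0, hv1⟩ := hv
    have hw0 : 0 < h v := lt_of_lt_of_le (by positivity) k1
    have h1v : (0:ℝ) < 1 - v := by linarith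
    have h1w : (0:ℝ) < 1 - h v := lt_of_lt_of_le (by positivity) k2
    have hw1 : h v < 1 := by linarith
    have hid : rHomeo (h v) - rHomeo v / A =
        (1/(A*v) - 1/(h v)) + (1/(1 - h v) - 1/(A*(1-v))) := by
      simp only [rHomeo]
      field_simp
      ring
    have hX : |1/(A*v) - 1/(h v)| ≤ 2/A + 2/m := by
      have e1 : 1/(A*v) ≤ 2/A := by
        rw [div_le_div_iff₀ (by positivity) ha]
        linarith [mul_le_mul_of_nonneg_left hv2 ha.le]
      have e2 : 1/(h v) ≤ 2/m := by
        rw [div_le_div_iff₀ hw0 hm]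
        linarith [mul_le_mul_of_nonneg_left hv2 hm.le, k1]
      have e3 : (0:ℝ) ≤ 1/(A*v) := by positivity
      have e4 : (0:ℝ) ≤ 1/(h v) := by positivity
      have e5 : (0:ℝ) ≤ 2/A := by positivity
      have e6 : (0:ℝ) ≤ 2/m := by positivity
      rw [abs_le]; constructor <;> linarith
    have hY : |1/(1 - h v) - 1/(A*(1-v))| ≤ K/(m*A) := by
      have hid2 : 1/(1 - h v) - 1/(A*(1-v)) =
          (A*(1-v) - (1 - h v)) / ((1 - h v) * (A*(1-v))) := by
        have hne : (1:ℝ) - h v ≠ 0 := ne_of_gt h1w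
        field_simp
        try ring
        try tauto
      rw [hid2, abs_div, abs_of_pos (mul_pos h1w (by positivity : (0:ℝ) < A*(1-v)))]
      rw [div_le_div_iff₀ (mul_pos h1w (by positivity : (0:ℝ) < A*(1-v))) (by positivity)]
      have hnum : |A*(1-v) - (1 - h v)| ≤ K * (1-v)^2 := by
        have heq : A*(1-v) - (1 - h v) = -(1 - h v - A * (1-v)) := by ring
        rw [heq, abs_neg]
        exact k4
      have hden : m*(1-v) * (A*(1-v)) ≤ (1 - h v) * (A*(1-v)) :=
        mul_le_mul_of_nonneg_right k2 (by positivity)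
      have t1 := mul_le_mul_of_nonneg_right hnum (mul_pos hm ha).le
      have t2 := mul_le_mul_of_nonneg_left hden hK0
      linarith [t1, t2]
    calc |rHomeo (h v) - rHomeo v / A|
        ≤ |1/(A*v) - 1/(h v)| + |1/(1 - h v) - 1/(A*(1-v))| := by
          rw [hid]; exact abs_add_le _ _
      _ ≤ (2/A + 2/m) + K/(m*A) := add_le_add hX hY
      _ ≤ C := by
          have : (0:ℝ) ≤ 2/Bv := by positivity
          have : (0:ℝ) ≤ K/(m*Bv) := by positivity
          rw [hCdef]; linarith
  have boundB : ∀ v ∈ Ioo (0:ℝ) 1, v ≤ 1/2 →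
      |rHomeo (h v) - rHomeo v / Bv| ≤ C := by
    intro v hv hv2
    obtain ⟨k1, k2, k3, _⟩ := key v hv
    obtain ⟨hv0, hv1⟩ := hv
    have hw0 : 0 < h v := lt_of_lt_of_le (by positivity) k1
    have h1v : (0:ℝ) < 1 - v := by linarith
    have h1w : (0:ℝ) < 1 - h v := lt_of_lt_of_le (by positivity) k2
    have hw1 : h v < 1 := by linarith
    have hid : rHomeo (h v) - rHomeo v / Bv =
        (1/(Bv*v) - 1/(h v)) + (1/(1 - h v) - 1/(Bv*(1-v))) := by
      simp only [rHomeo]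
      field_simp
      ring
    have hX : |1/(1 - h v) - 1/(Bv*(1-v))| ≤ 2/m + 2/Bv := by
      have e1 : 1/(1 - h v) ≤ 2/m := by
        rw [div_le_div_iff₀ h1w hm]
        linarith [mul_le_mul_of_nonneg_left (by linarith : (1:ℝ)/2 ≤ 1 - v) hm.le, k2]
      have e2 : 1/(Bv*(1-v)) ≤ 2/Bv := by
        rw [div_le_div_iff₀ (by positivity) hbpos]
        linarith [mul_le_mul_of_nonneg_left (by linarith : (1:ℝ)/2 ≤ 1 - v) hbpos.le]
      have e3 : (0:ℝ) ≤ 1/(1 - h v) := by positivity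
      have e4 : (0:ℝ) ≤ 1/(Bv*(1-v)) := by positivity
      have e5 : (0:ℝ) ≤ 2/m := by positivity
      have e6 : (0:ℝ) ≤ 2/Bv := by positivity
      rw [abs_le]; constructor <;> linarith
    have hY : |1/(Bv*v) - 1/(h v)| ≤ K/(m*Bv) := by
      have hid2 : 1/(Bv*v) - 1/(h v) = (h v - Bv * v) / (h v * (Bv * v)) := by
        have hne : h v ≠ 0 := ne_of_gt hw0
        field_simp
        try ring
        try tauto
      rw [hid2, abs_div, abs_of_pos (mul_pos hw0 (by positivity : (0:ℝ) < Bv*v))]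
      rw [div_le_div_iff₀ (mul_pos hw0 (by positivity : (0:ℝ) < Bv*v)) (by positivity)]
      have hnum : |h v - Bv * v| ≤ K * v^2 := k3
      have hden : m*v * (Bv*v) ≤ h v * (Bv*v) :=
        mul_le_mul_of_nonneg_right k1 (by positivity)
      have t1 := mul_le_mul_of_nonneg_right hnum (mul_pos hm hbpos).le
      have t2 := mul_le_mul_of_nonneg_left hden hK0
      linarith [t1, t2]
    calc |rHomeo (h v) - rHomeo v / Bv|
        ≤ |1/(Bv*v) - 1/(h v)| + |1/(1 - h v) - 1/(Bv*(1-v))| := by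
          rw [hid]; exact abs_add_le _ _
      _ ≤ K/(m*Bv) + (2/m + 2/Bv) := add_le_add hY hX
      _ ≤ C := by
          have : (0:ℝ) ≤ 2/A := by positivity
          have : (0:ℝ) ≤ K/(m*A) := by positivity
          rw [hCdef]; linarith
  -- sign of rHomeo
  have hsign : ∀ v ∈ Ioo (0:ℝ) 1, (0 ≤ rHomeo v ↔ 1/2 ≤ v) := by
    intro v hv
    have hv0 := hv.1
    have h1v : (0:ℝ) < 1 - v := by linarith [hv.2]
    have hr : rHomeo v = (2*v - 1) / (v * (1-v)) := by
      simp only [rHomeo]; field_simp; ring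
    rw [hr]
    rw [div_nonneg_iff]
    constructor
    · rintro (⟨h1, _⟩ | ⟨_, h2⟩)
      · linarith
      · nlinarith [mul_pos hv0 h1v]
    · intro hle
      exact Or.inl ⟨by linarith, by positivity⟩
  -- key bounds in terms of x
  have keyA : ∀ x : ℝ, 0 ≤ x → |rHomeo (h (rinv x)) - x / A| ≤ C := by
    intro x hx
    have hmem := hrinv_mem x
    have hge : 1/2 ≤ rinv x := (hsign _ hmem).mp (by rw [hrinv_right x]; exact hx)
    have := boundA _ hmem hge
    rwa [hrinv_right x] at this
  have keyB : ∀ x : ℝ, x ≤ 0 → |rHomeo (h (rinv x)) - x / Bv| ≤ C := by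
    intro x hx
    have hmem := hrinv_mem x
    have hle : rinv x ≤ 1/2 := by
      by_contra hcon
      push_neg at hcon
      have : 0 ≤ rHomeo (rinv x) := (hsign _ hmem).mpr hcon.le
      rw [hrinv_right x] at this
      rcases lt_or_eq_of_le hx with h' | h'
      · linarith
      · -- x = 0 : rinv 0 = 1/2 exactly? if x = 0 then rHomeo (rinv 0) = 0 so fine
        have h12 : rHomeo (1/2 : ℝ) = 0 := by norm_num [rHomeo]
        have : rinv x = 1/2 := by
          have := hrinv_left (1/2) (by norm_num)
          rw [h12] at this
          rw [h', ← this]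
        linarith
    have := boundB _ hmem hle
    rwa [hrinv_right x] at this
  set f : ℝ → ℝ := fun x => rHomeo (h (rinv x)) with hfdef
  -- tendsto at top
  have ht1 : Tendsto (fun x : ℝ => f x / x) atTop (𝓝 (1/A)) := by
    have h0' : Tendsto (fun x : ℝ => (f x - x / A) / x) atTop (𝓝 0) := by
      apply squeeze_zero_norm' (a := fun x : ℝ => C / x)
      · filter_upwards [eventually_ge_atTop (1:ℝ)] with x hx
        have hxpos : (0:ℝ) < x := lt_of_lt_of_le one_pos hx
        rw [Real.norm_eq_abs, abs_div, abs_of_pos hxpos]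
        gcongr
        exact keyA x hxpos.le
      · exact tendsto_const_nhds.div_atTop tendsto_id
    have h1' : Tendsto (fun x : ℝ => 1/A + (f x - x / A) / x) atTop (𝓝 (1/A)) := by
      simpa using h0'.const_add (1/A)
    apply h1'.congr'
    filter_upwards [eventually_ge_atTop (1:ℝ)] with x hx
    have hxne : x ≠ 0 := by positivity
    have hAne : A ≠ 0 := ne_of_gt ha
    field_simp
    try ring
  have ht2 : Tendsto (fun x : ℝ => f x / x) atBot (𝓝 (1/Bv)) := by
    have h0' : Tendsto (fun x : ℝ => (f x - x / Bv) / x) atBot (𝓝 0) := by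
      apply squeeze_zero_norm' (a := fun x : ℝ => C / (-x))
      · filter_upwards [eventually_le_atBot (-1:ℝ)] with x hx
        have hxneg : x < 0 := lt_of_le_of_lt hx (by norm_num)
        rw [Real.norm_eq_abs, abs_div, abs_of_neg hxneg]
        gcongr
        · linarith
        · exact keyB x hxneg.le
      · exact (tendsto_const_nhds.div_atTop tendsto_id).comp tendsto_neg_atBot_atTop
    have h1' : Tendsto (fun x : ℝ => 1/Bv + (f x - x / Bv) / x) atBot (𝓝 (1/Bv)) := by
      simpa using h0'.const_add (1/Bv)
    apply h1'.congr'
    filter_upwards [eventually_le_atBot (-1:ℝ)] with x hx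
    have hxne : x ≠ 0 := by intro hc; rw [hc] at hx; norm_num at hx
    have hBne : Bv ≠ 0 := ne_of_gt hbpos
    field_simp
    try ring
  refine ⟨ht1.limsup_eq, ht2.limsup_eq, ?_, ?_, ?_⟩
  · exact isBoundedUnder_of_eventually_le (a := C) <| by
      filter_upwards [eventually_ge_atTop (0:ℝ)] with x hx
      exact (abs_le.mp (keyA x hx)).2
  · exact isBoundedUnder_of_eventually_ge (a := -C) <| by
      filter_upwards [eventually_le_atBot (0:ℝ)] with x hx
      linarith [(abs_le.mp (keyB x hx)).1]
  · refine ⟨C, hCpos, fun x => ?_⟩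
    rcases le_or_gt 0 x with hx | hx
    · have hk := abs_le.mp (keyA x hx)
      rw [max_eq_left hx, max_eq_right (neg_nonpos.mpr hx)]
      constructor
      · have : 0 ≤ x / A := by positivity
        nlinarith [hk.1]
      · have : x / A = 1/A * x := by ring
        nlinarith [hk.2]
    · have hk := abs_le.mp (keyB x hx.le)
      rw [max_eq_right hx.le, max_eq_left (neg_nonneg.mpr hx.le)]
      constructor
      · have : x / Bv = -(1/Bv * -x) := by ring
        nlinarith [hk.1]
      · have hle : x / Bv ≤ 0 := by
          have h2 : (0:ℝ) ≤ 1/Bv := by positivity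
          have h3 : x/Bv = x * (1/Bv) := by ring
          nlinarith
        have : (1/A) * 0 = 0 := by ring
        nlinarith [hk.2]
end
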